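/- arXiv:2506.09767 — 2 statements merged into one kernel-verified Lean document; each statement's English description precedes it below -/
import Mathlib

section
/- Let k ≥ 5 and let G be a C_k-saturated graph. Let u_0 u_1 … u_r and v_0 v_1 … v_s be two vertex-disjoint paths in G all of whose vertices have degree two in G, with r + s ≥ k − 1. If u_0 and v_0 have a common neighbor w, then there exists a path in G between w and u_r of length k − r − 3 which does not pass through u_0. -/
open SimpleGraph

/-- `F` has a copy in `G`, i.e. `G` has a subgraph isomorphic to `F`:
there is an injective graph homomorphism from `F` to `G`. -/
def HasCopy {α : Type*} {β : Type*} (F : SimpleGraph α) (G : SimpleGraph β) : Prop :=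
  ∃ f : F →g G, Function.Injective f

/-- `G` is `F`-saturated: `G` is `F`-free and adding any edge between two
distinct nonadjacent vertices creates a subgraph isomorphic to `F`. -/
def IsSat {α : Type*} {β : Type*} (F : SimpleGraph α) (G : SimpleGraph β) : Prop :=
  ¬ HasCopy F G ∧
    ∀ x y : β, x ≠ y → ¬ G.Adj x y → HasCopy F (G ⊔ fromEdgeSet {s(x, y)})

/-- `sat(n, F)`: the minimum number of edges in an `F`-saturated graph on `n` vertices. -/
noncomputable def satNumber {α : Type*} (F : SimpleGraph α) (n : ℕ) : ℕ :=
  sInf {m : ℕ | ∃ G : SimpleGraph (Fin n), IsSat F G ∧ G.edgeSet.ncard = m}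

/-- `N_H(W)`: the set of vertices adjacent to all vertices of `W`. -/
def commonNbrs {V : Type*} (H : SimpleGraph V) (W : Set V) : Set V :=
  {v : V | ∀ u ∈ W, H.Adj u v}


section Infra0

section Infra

variable {V : Type} {G : SimpleGraph V}

lemma getVert_mem_support' {a b : V} (P : G.Walk a b) {i : ℕ} (hi : i ≤ P.length) :
    P.getVert i ∈ P.support :=
  Walk.mem_support_iff_exists_getVert.mpr ⟨i, rfl, hi⟩

lemma getVert_inj' : ∀ {a b : V} (P : G.Walk a b), P.IsPath →
    ∀ i j, i ≤ P.length → j ≤ P.length → P.getVert i = P.getVert j → i = j := by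
  intro a b P
  induction P with
  | nil => intro _ i j hi hj _; simp [Walk.length_nil] at hi hj; omega
  | @cons a c b h q ih =>
    intro hp i j hi hj hij
    rw [Walk.cons_isPath_iff] at hp
    match i, j with
    | 0, 0 => rfl
    | 0, (j+1) =>
      exfalso; apply hp.2
      rw [Walk.getVert_cons_succ] at hij
      have : q.getVert j ∈ q.support :=
        getVert_mem_support' q (by simpa [Walk.length_cons] using hj)
      rwa [← hij] at this
    | (i+1), 0 =>
      exfalso; apply hp.2
      rw [Walk.getVert_cons_succ] at hij
      have : q.getVert i ∈ q.support :=
        getVert_mem_support' q (by simpa [Walk.length_cons] using hi)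
      rwa [hij] at this
    | (i+1), (j+1) =>
      have := ih hp.1 i j (by simpa [Walk.length_cons] using hi)
        (by simpa [Walk.length_cons] using hj)
        (by simpa [Walk.getVert_cons_succ] using hij)
      omega

lemma isPath_of_getVert_inj' : ∀ {a b : V} (P : G.Walk a b),
    (∀ i j, i ≤ P.length → j ≤ P.length → P.getVert i = P.getVert j → i = j) → P.IsPath := by
  intro a b P
  induction P with
  | nil => intro _; exact Walk.IsPath.nil
  | @cons a c b h q ih =>
    intro hinj
    rw [Walk.cons_isPath_iff]
    constructor
    · exact ih (fun i j hi hj hij => by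
        have := hinj (i+1) (j+1) (by simp [Walk.length_cons]; omega)
          (by simp [Walk.length_cons]; omega) (by simpa [Walk.getVert_cons_succ] using hij)
        omega)
    · intro hmem
      obtain ⟨n, hn, hnle⟩ := Walk.mem_support_iff_exists_getVert.mp hmem
      have := hinj 0 (n+1) (by omega) (by simp [Walk.length_cons]; omega)
        (by simpa [Walk.getVert_cons_succ, Walk.getVert_zero] using hn.symm)
      omega

/-- Build a walk from a function with consecutive adjacencies. -/
def buildWalk (G : SimpleGraph V) (g : ℕ → V) :
    ∀ (m : ℕ), (∀ i, i < m → G.Adj (g i) (g (i+1))) → G.Walk (g 0) (g m)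
  | 0, _ => Walk.nil
  | (m+1), h => Walk.cons (h 0 (by omega))
      (buildWalk G (fun i => g (i+1)) m (fun i hi => h (i+1) (by omega)))

lemma buildWalk_length (g : ℕ → V) :
    ∀ (m : ℕ) (h : ∀ i, i < m → G.Adj (g i) (g (i+1))), (buildWalk G g m h).length = m := by
  intro m
  induction m generalizing g with
  | zero => intro h; rfl
  | succ m ih => intro h; simp [buildWalk, Walk.length_cons, ih]

lemma buildWalk_getVert (g : ℕ → V) :
    ∀ (m : ℕ) (h : ∀ i, i < m → G.Adj (g i) (g (i+1))) (t : ℕ), t ≤ m →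
      (buildWalk G g m h).getVert t = g t := by
  intro m
  induction m generalizing g with
  | zero => intro h t ht; interval_cases t; simp [buildWalk]
  | succ m ih =>
    intro h t ht
    match t with
    | 0 => simp [buildWalk]
    | (t+1) =>
      simp only [buildWalk, Walk.getVert_cons_succ]
      exact ih (fun i => g (i+1)) _ t (by omega)

lemma buildWalk_isPath (g : ℕ → V) (m : ℕ) (h : ∀ i, i < m → G.Adj (g i) (g (i+1)))
    (hinj : ∀ i j, i ≤ m → j ≤ m → g i = g j → i = j) : (buildWalk G g m h).IsPath := by
  apply isPath_of_getVert_inj'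
  intro i j hi hj hij
  rw [buildWalk_length] at hi hj
  rw [buildWalk_getVert g m h i hi, buildWalk_getVert g m h j hj] at hij
  exact hinj i j hi hj hij

variable [Fintype V]

lemma two_nbrs {v c d : V} (hdeg : (G.neighborSet v).ncard = 2)
    (hc : G.Adj v c) (hd : G.Adj v d) (hcd : c ≠ d) {z : V} (hz : G.Adj v z) :
    z = c ∨ z = d := by
  have hsub : ({c, d} : Set V) ⊆ G.neighborSet v := by
    intro x hx; rcases hx with h | h
    · subst h; exact hc
    · simp only [Set.mem_singleton_iff] at h; subst h; exact hd
  have heq : ({c, d} : Set V) = G.neighborSet v :=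
    Set.eq_of_subset_of_ncard_le hsub (by rw [hdeg, Set.ncard_pair hcd]) (Set.toFinite _)
  have : z ∈ G.neighborSet v := hz
  rw [← heq] at this
  simpa using this

lemma other_nbr {v c : V} (hdeg : (G.neighborSet v).ncard = 2) (hc : G.Adj v c) :
    ∃ d, G.Adj v d ∧ d ≠ c ∧ (∀ z, G.Adj v z → z = c ∨ z = d) := by
  obtain ⟨x, y, hxy, hN⟩ := Set.ncard_eq_two.mp hdeg
  have hcN : c ∈ G.neighborSet v := hc
  rw [hN] at hcN
  rcases hcN with h | h
  · subst h
    refine ⟨y, ?_, hxy.symm, ?_⟩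
    · have : y ∈ G.neighborSet v := by rw [hN]; simp
      exact this
    · intro z hz
      have : z ∈ G.neighborSet v := hz
      rw [hN] at this; simpa using this
  · simp only [Set.mem_singleton_iff] at h; subst h
    refine ⟨x, ?_, hxy, ?_⟩
    · have : x ∈ G.neighborSet v := by rw [hN]; simp
      exact this
    · intro z hz
      have : z ∈ G.neighborSet v := hz
      rw [hN] at this
      rcases this with h | h
      · right; exact h
      · left; simpa using h

/-- The degree-2 forcing chain lemma. -/
lemma chain_forced {a b : V} (P : G.Walk a b) (hP : P.IsPath)
    (f : ℕ → V) (T : ℕ)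
    (hadj : ∀ t, t < T → G.Adj (f t) (f (t+1)))
    (hdeg : ∀ t, 0 < t → t < T → (G.neighborSet (f t)).ncard = 2)
    (hfinj : ∀ t t', t ≤ T → t' ≤ T → f t = f t' → t = t')
    (hb : ∀ t, t < T → f t ≠ b)
    (h0 : f 0 = a)
    (h1 : 1 ≤ T → P.getVert 1 = f 1) :
    ∀ t, t ≤ T → P.getVert t = f t := by
  intro t
  induction t using Nat.strong_induction_on with
  | _ t ih =>
    intro ht
    match t with
    | 0 => simpa [Walk.getVert_zero] using h0.symm
    | 1 => exact h1 ht
    | (n+2) =>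
      have e1 : P.getVert (n+1) = f (n+1) := ih (n+1) (by omega) (by omega)
      have e0 : P.getVert n = f n := ih n (by omega) (by omega)
      have hne_b : f (n+1) ≠ b := hb _ (by omega)
      have hlt : n + 1 < P.length := by
        rcases lt_or_ge (n+1) P.length with h | h
        · exact h
        · exact absurd (e1.symm.trans (P.getVert_of_length_le h)) hne_b
      have hadjQ : G.Adj (f (n+1)) (P.getVert (n+2)) := e1 ▸ P.adj_getVert_succ hlt
      have hne2 : f (n+2) ≠ f n := by
        intro hcon
        have := hfinj (n+2) n (by omega) (by omega) hcon
        omega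
      rcases two_nbrs (hdeg (n+1) (by omega) (by omega)) (hadj (n+1) (by omega))
        ((hadj n (by omega)).symm) hne2 hadjQ with h | h
      · exact h
      · exfalso
        rw [← e0] at h
        have := getVert_inj' P hP (n+2) n (by omega) (by omega) h
        omega

end Infra


section Cyc

variable {V : Type} {G : SimpleGraph V}

lemma fin_val_one {k : ℕ} [NeZero k] (hk : 5 ≤ k) : ((1 : Fin k) : ℕ) = 1 := by
  rw [Fin.val_one' k]
  exact Nat.mod_eq_of_lt (by omega)

lemma cycle_adj_succ {k : ℕ} [NeZero k] (hk : 5 ≤ k) (u : Fin k) :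
    (cycleGraph k).Adj u (u + 1) := by
  rw [cycleGraph_adj']
  right
  rw [add_sub_cancel_left]
  exact fin_val_one hk

lemma cycle_adj_cases {k : ℕ} [NeZero k] (hk : 5 ≤ k) {u v : Fin k}
    (h : (cycleGraph k).Adj u v) : u = v + 1 ∨ v = u + 1 := by
  rw [cycleGraph_adj'] at h
  have h1 : ((1 : Fin k) : ℕ) = 1 := fin_val_one hk
  rcases h with h | h
  · left
    have h2 : u - v = 1 := Fin.ext (by rw [h, h1])
    have := sub_eq_iff_eq_add.mp h2
    rw [this]; exact add_comm _ _
  · right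
    have h2 : v - u = 1 := Fin.ext (by rw [h, h1])
    have := sub_eq_iff_eq_add.mp h2
    rw [this]; exact add_comm _ _

end Cyc

section Cyc2

variable {V : Type} {G : SimpleGraph V}

lemma mod_cancel {k x i j : ℕ} (hk : 0 < k) (hi : i < k) (hj : j < k)
    (h : (x + i) % k = (x + j) % k) : i = j := by
  have h' : x + i ≡ x + j [MOD k] := h
  have h2 : i ≡ j [MOD k] := Nat.ModEq.add_left_cancel' x h'
  unfold Nat.ModEq at h2
  rwa [Nat.mod_eq_of_lt hi, Nat.mod_eq_of_lt hj] at h2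

lemma hasCopy_of_cycle {k : ℕ} (hk : 5 ≤ k) (G : SimpleGraph V) (g : ℕ → V)
    (hadj : ∀ i, i < k - 1 → G.Adj (g i) (g (i+1)))
    (hclose : G.Adj (g (k-1)) (g 0))
    (hinj : ∀ i j, i ≤ k-1 → j ≤ k-1 → g i = g j → i = j) :
    HasCopy (cycleGraph k) G := by
  haveI : NeZero k := ⟨by omega⟩
  have key : ∀ u : Fin k, G.Adj (g u.val) (g ((u+1 : Fin k)).val) := by
    intro u
    have hval : ((u+1 : Fin k)).val = (u.val + 1) % k := by
      rw [Fin.add_def, fin_val_one hk]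
    rcases lt_or_ge u.val (k-1) with h | h
    · have : ((u+1 : Fin k)).val = u.val + 1 := by
        rw [hval, Nat.mod_eq_of_lt (by omega)]
      rw [this]; exact hadj u.val h
    · have hu : u.val = k - 1 := by have := u.isLt; omega
      have : ((u+1 : Fin k)).val = 0 := by
        rw [hval, hu]
        have : k - 1 + 1 = k := by omega
        rw [this, Nat.mod_self]
      rw [this, hu]; exact hclose
  refine ⟨⟨fun i => g i.val, ?_⟩, ?_⟩
  · intro u v huv
    rcases cycle_adj_cases hk huv with h | h
    · subst h; exact (key v).symm
    · subst h; exact key u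
  · intro u v h
    exact Fin.ext (hinj u.val v.val (by have := u.isLt; omega) (by have := v.isLt; omega) h)

lemma exists_path_of_sat {k : ℕ} (hk : 5 ≤ k)
    (hfree : ¬ HasCopy (cycleGraph k) G) {a b : V} (hab : a ≠ b)
    (hcopy : HasCopy (cycleGraph k) (G ⊔ fromEdgeSet {s(a, b)})) :
    ∃ P : G.Walk a b, P.IsPath ∧ P.length = k - 1 := by
  haveI : NeZero k := ⟨by omega⟩
  obtain ⟨f, finj⟩ := hcopy
  have hadjf : ∀ u : Fin k, (G ⊔ fromEdgeSet {s(a,b)}).Adj (f u) (f (u+1)) :=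
    fun u => f.map_adj (cycle_adj_succ hk u)
  by_cases hex : ∃ i : Fin k, s(f i, f (i+1)) = s(a, b)
  · obtain ⟨i₀, hi₀⟩ := hex
    set c := i₀.val + 1 with hc
    set g : ℕ → V := fun j => f ⟨(c + j) % k, Nat.mod_lt _ (by omega)⟩ with hg
    have hgf : ∀ j, g j = f ⟨(c + j) % k, Nat.mod_lt _ (by omega)⟩ := fun j => rfl
    have hstep : ∀ j, (⟨(c + j) % k, Nat.mod_lt _ (by omega)⟩ : Fin k) + 1
        = ⟨(c + (j+1)) % k, Nat.mod_lt _ (by omega)⟩ := by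
      intro j
      apply Fin.ext
      rw [Fin.add_def, fin_val_one hk]
      simp only
      rw [Nat.mod_add_mod]
      ring_nf
    have hGadj : ∀ j, j < k - 1 → G.Adj (g j) (g (j+1)) := by
      intro j hj
      have h2 := hadjf ⟨(c + j) % k, Nat.mod_lt _ (by omega)⟩
      rw [hstep j] at h2
      rw [← hgf j, ← hgf (j+1)] at h2
      rcases (sup_adj _ _ _ _).mp h2 with h3 | h3
      · exact h3
      · exfalso
        rw [fromEdgeSet_adj] at h3
        have h4 : s(g j, g (j+1)) = s(a, b) := by simpa using h3.1
        rw [← hi₀] at h4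
        rw [Sym2.eq_iff] at h4
        rcases h4 with ⟨h5, h6⟩ | ⟨h5, h6⟩
        · -- g j = f i₀
          have h7 : ((c + j) % k) = i₀.val := by
            have := finj (a₁ := ⟨(c + j) % k, Nat.mod_lt _ (by omega)⟩) (a₂ := i₀) h5
            exact congrArg Fin.val this
          have h8 : (i₀.val + (1 + j)) % k = (i₀.val + 0) % k := by
            rw [show i₀.val + (1 + j) = c + j from by omega, h7,
              Nat.add_zero, Nat.mod_eq_of_lt i₀.isLt]
          have := mod_cancel (by omega) (by omega) (by omega) h8
          omega
        · -- g j = f (i₀ + 1)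
          have h7 : ((c + j) % k) = ((i₀ + 1 : Fin k)).val := by
            have := finj (a₁ := ⟨(c + j) % k, Nat.mod_lt _ (by omega)⟩) (a₂ := i₀ + 1) h5
            exact congrArg Fin.val this
          have hval : ((i₀+1 : Fin k)).val = (i₀.val + 1) % k := by
            rw [Fin.add_def, fin_val_one hk]
          have h8 : ((i₀.val + 1) + j) % k = ((i₀.val + 1) + 0) % k := by
            rw [Nat.add_zero]
            rw [← hval, ← h7]
          have hj0 : j = 0 := mod_cancel (by omega) (by omega) (by omega) h8
          subst hj0
          -- g 1 = f i₀ : (c + 1) % k = i₀.val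
          have h9 : ((c + 1) % k) = i₀.val := by
            have := finj (a₁ := ⟨(c + 1) % k, Nat.mod_lt _ (by omega)⟩) (a₂ := i₀) h6
            exact congrArg Fin.val this
          have h10 : (i₀.val + 2) % k = (i₀.val + 0) % k := by
            rw [show i₀.val + 2 = c + 1 from by omega, h9,
              Nat.add_zero, Nat.mod_eq_of_lt i₀.isLt]
          have := mod_cancel (k := k) (x := i₀.val) (by omega) (by omega) (by omega) h10
          omega
    have hg0 : g 0 = f (i₀ + 1) := by
      apply congrArg f
      apply Fin.ext
      rw [Fin.add_def, fin_val_one hk]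
    have hgk : g (k-1) = f i₀ := by
      apply congrArg f
      apply Fin.ext
      simp only
      have : c + (k - 1) = i₀.val + k := by omega
      rw [this, Nat.add_mod_right, Nat.mod_eq_of_lt i₀.isLt]
    have hginj : ∀ i j, i ≤ k-1 → j ≤ k-1 → g i = g j → i = j := by
      intro i j hi hj hij
      have := finj hij
      have hval : (c + i) % k = (c + j) % k := congrArg Fin.val this
      exact mod_cancel (by omega) (by omega) (by omega) hval
    have hWlen : (buildWalk G g (k-1) hGadj).length = k - 1 := buildWalk_length g (k-1) hGadj
    have hWpath : (buildWalk G g (k-1) hGadj).IsPath := buildWalk_isPath g (k-1) hGadj hginj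
    rcases Sym2.eq_iff.mp hi₀ with ⟨ha', hb'⟩ | ⟨ha', hb'⟩
    · -- f i₀ = a, f (i₀+1) = b : (buildWalk G g (k-1) hGadj) : b → a, reverse
      have e0 : g 0 = b := by rw [hg0, hb']
      have e1 : g (k-1) = a := by rw [hgk, ha']
      refine ⟨((buildWalk G g (k-1) hGadj).copy e0 e1).reverse, ?_, ?_⟩
      · exact (((Walk.isPath_copy _ e0 e1).mpr hWpath)).reverse
      · simp [Walk.length_reverse, hWlen]
    · have e0 : g 0 = a := by rw [hg0, hb']
      have e1 : g (k-1) = b := by rw [hgk, ha']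
      exact ⟨(buildWalk G g (k-1) hGadj).copy e0 e1, by simp [hWpath], by simp [hWlen]⟩
  · exfalso
    apply hfree
    push_neg at hex
    refine ⟨⟨f, ?_⟩, finj⟩
    intro u v huv
    have key : ∀ x : Fin k, G.Adj (f x) (f (x+1)) := by
      intro x
      rcases (sup_adj _ _ _ _).mp (hadjf x) with h3 | h3
      · exact h3
      · exfalso
        rw [fromEdgeSet_adj] at h3
        exact hex x (by simpa using h3.1)
    rcases cycle_adj_cases hk huv with h | h
    · subst h; exact (key v).symm
    · subst h; exact key u

end Cyc2

section Main

variable {k : ℕ} {V : Type} [Fintype V] {G : SimpleGraph V}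

lemma deadEnd2 (hk : 5 ≤ k) (hsat : IsSat (cycleGraph k) G) {e0 e1 a c : V}
    (q : G.Walk e0 e1) (hq : q.IsPath) (hs : k - 2 ≤ q.length)
    (hqdeg : ∀ j, j ≤ q.length → (G.neighborSet (q.getVert j)).ncard = 2)
    (hadeg : (G.neighborSet a).ncard = 2) (hcdeg : (G.neighborSet c).ncard = 2)
    (hac : G.Adj a c) (hc0 : G.Adj c e0)
    (haq : ∀ j, j ≤ q.length → a ≠ q.getVert j)
    (hcq : ∀ j, j ≤ q.length → c ≠ q.getVert j) : False := by
  set s := q.length with hsdef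
  have hs3 : 3 ≤ s := by omega
  have hvinj : ∀ i j, i ≤ s → j ≤ s → q.getVert i = q.getVert j → i = j := getVert_inj' q hq
  have hvadj : ∀ j, j < s → G.Adj (q.getVert j) (q.getVert (j+1)) := fun j hj => q.adj_getVert_succ hj
  have hc0' : G.Adj c (q.getVert 0) := by rwa [Walk.getVert_zero]
  have hNc : ∀ z, G.Adj c z → z = a ∨ z = q.getVert 0 :=
    fun z hz => two_nbrs hcdeg hac.symm hc0' (haq 0 (by omega)) hz
  have hNv0 : ∀ z, G.Adj (q.getVert 0) z → z = c ∨ z = q.getVert 1 :=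
    fun z hz => two_nbrs (hqdeg 0 (by omega)) hc0'.symm (hvadj 0 (by omega))
      (hcq 1 (by omega)) hz
  have hNvmid : ∀ j, 0 < j → j < s → ∀ z, G.Adj (q.getVert j) z → z = q.getVert (j-1) ∨ z = q.getVert (j+1) := by
    intro j hj0 hjs z hz
    have hadj1 : G.Adj (q.getVert (j-1)) (q.getVert j) := by
      have := hvadj (j-1) (by omega)
      rwa [show j - 1 + 1 = j from by omega] at this
    exact two_nbrs (hqdeg j (by omega)) hadj1.symm (hvadj j hjs)
      (fun hcon => by have := hvinj (j-1) (j+1) (by omega) (by omega) hcon; omega) hz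
  -- Round 1 : pair (a, q.getVert 0)
  have hne1 : a ≠ q.getVert 0 := haq 0 (by omega)
  have hnadj1 : ¬ G.Adj a (q.getVert 0) := by
    intro h
    rcases hNv0 a h.symm with h' | h'
    · exact (G.ne_of_adj hac) h'
    · exact haq 1 (by omega) h'
  obtain ⟨Q, hQ, hQlen⟩ := exists_path_of_sat hk hsat.1 hne1 (hsat.2 a (q.getVert 0) hne1 hnadj1)
  have hQrev : Q.reverse.IsPath := hQ.reverse
  have hQrevlen : Q.reverse.length = k - 1 := by rw [Walk.length_reverse, hQlen]
  have hz1adj : G.Adj (q.getVert 0) (Q.reverse.getVert 1) := by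
    have := Q.reverse.adj_getVert_succ (i := 0) (by omega)
    rwa [Walk.getVert_zero] at this
  rcases hNv0 _ hz1adj with hz | hz
  · -- pred = c : forces k = 3
    have h1 : Q.getVert (k-2) = c := by
      rw [Walk.getVert_reverse, hQlen] at hz
      rwa [show k - 1 - 1 = k - 2 from by omega] at hz
    have hadjc : G.Adj c (Q.getVert (k-3)) := by
      have := Q.adj_getVert_succ (i := k-3) (by omega)
      rw [show k - 3 + 1 = k - 2 from by omega, h1] at this
      exact this.symm
    rcases hNc _ hadjc with h' | h'
    · have h'' : Q.getVert (k-3) = Q.getVert 0 := h'.trans (Walk.getVert_zero Q).symm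
      have := getVert_inj' Q hQ (k-3) 0 (by omega) (by omega) h''
      omega
    · have h'' : Q.getVert (k-3) = Q.getVert (k-1) := by
        rw [h']
        have : Q.getVert Q.length = q.getVert 0 := Q.getVert_length
        rw [hQlen] at this
        exact this.symm
      have := getVert_inj' Q hQ (k-3) (k-1) (by omega) (by omega) h''
      omega
  · -- pred = q.getVert 1 : backward chain along q
    have hchain : ∀ t, t ≤ s → Q.reverse.getVert t = q.getVert t := by
      apply chain_forced Q.reverse hQrev q.getVert s hvadj
        (fun t ht0 hts => hqdeg t (by omega))
        (fun t t' ht ht' h => hvinj t t' ht ht' h)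
        (fun t ht => Ne.symm (haq t (by omega)))
        rfl (fun _ => hz)
    rcases le_or_gt (k-1) s with hcase | hcase
    · have h1 := hchain (k-1) hcase
      have h2 : Q.reverse.getVert (k-1) = a := by
        rw [← hQrevlen]; exact Q.reverse.getVert_length
      exact haq (k-1) (by omega) (by rw [← h2, h1])
    · -- s = k - 2
      have hseq : s = k - 2 := by omega
      have h1 : Q.getVert 1 = q.getVert s := by
        have := hchain s le_rfl
        rw [Walk.getVert_reverse, hQlen, show k - 1 - s = 1 from by omega] at this
        exact this
      have hax : G.Adj a (q.getVert s) := by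
        have := Q.adj_getVert_succ (i := 0) (by omega)
        rwa [Walk.getVert_zero, h1] at this
      -- Round 2 : pair (a, q.getVert 1)
      have hNa : ∀ z, G.Adj a z → z = c ∨ z = q.getVert s :=
        fun z hz' => two_nbrs hadeg hac hax (hcq s le_rfl) hz'
      have hne2 : a ≠ q.getVert 1 := haq 1 (by omega)
      have hnadj2 : ¬ G.Adj a (q.getVert 1) := by
        intro h
        rcases hNa _ h with h' | h'
        · exact hcq 1 (by omega) h'.symm
        · have := hvinj 1 s (by omega) le_rfl h'
          omega
      obtain ⟨Q', hQ', hQL'⟩ := exists_path_of_sat hk hsat.1 hne2 (hsat.2 a (q.getVert 1) hne2 hnadj2)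
      have hz'adj : G.Adj a (Q'.getVert 1) := by
        have := Q'.adj_getVert_succ (i := 0) (by omega)
        rwa [Walk.getVert_zero] at this
      have hend' : Q'.getVert (k-1) = q.getVert 1 := by
        rw [← hQL']; exact Q'.getVert_length
      rcases hNa _ hz'adj with hz' | hz'
      · -- succ = c
        have hadj2 : G.Adj c (Q'.getVert 2) := by
          have := Q'.adj_getVert_succ (i := 1) (by omega)
          rwa [hz'] at this
        have h2v0 : Q'.getVert 2 = q.getVert 0 := by
          rcases hNc _ hadj2 with h' | h'
          · exfalso
            have h'' : Q'.getVert 2 = Q'.getVert 0 := by rw [h', Walk.getVert_zero]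
            have := getVert_inj' Q' hQ' 2 0 (by omega) (by omega) h''
            omega
          · exact h'
        have hadj3 : G.Adj (q.getVert 0) (Q'.getVert 3) := by
          have := Q'.adj_getVert_succ (i := 2) (by omega)
          rwa [h2v0] at this
        rcases hNv0 _ hadj3 with h' | h'
        · rw [← hz'] at h'
          have := getVert_inj' Q' hQ' 3 1 (by omega) (by omega) h'
          omega
        · have h'' : Q'.getVert 3 = Q'.getVert (k-1) := h'.trans hend'.symm
          have := getVert_inj' Q' hQ' 3 (k-1) (by omega) (by omega) h''
          omega
      · -- succ = q.getVert s : forward chain, contradiction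
        have hchain2 : ∀ t, t ≤ s → Q'.getVert t = (fun t => if t = 0 then a else q.getVert (s+1-t)) t := by
          apply chain_forced Q' hQ' _ s
          · intro t ht
            by_cases ht0 : t = 0
            · subst ht0
              simpa [show s + 1 - 1 = s from by omega] using hax
            · rw [if_neg ht0, if_neg (Nat.succ_ne_zero t),
                show s+1-(t+1) = s - t from by omega, show s+1-t = (s-t)+1 from by omega]
              exact (hvadj (s-t) (by omega)).symm
          · intro t ht0 hts
            simp only [show t ≠ 0 from by omega, if_false]
            exact hqdeg (s+1-t) (by omega)
          · intro t t' ht ht' h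
            by_cases h0 : t = 0 <;> by_cases h0' : t' = 0 <;>
              simp only [h0, h0', if_true, if_false] at h
            · omega
            · exact absurd h (haq (s+1-t') (by omega))
            · exact absurd h.symm (haq (s+1-t) (by omega))
            · have := hvinj (s+1-t) (s+1-t') (by omega) (by omega) h
              omega
          · intro t ht
            by_cases h0 : t = 0
            · simp only [h0, if_true]; exact haq 1 (by omega)
            · simp only [h0, if_false]
              intro hcon
              have := hvinj (s+1-t) 1 (by omega) (by omega) hcon
              omega
          · simp
          · intro _
            simpa [show s + 1 - 1 = s from by omega] using hz'
        have hfin := hchain2 s le_rfl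
        simp only [show s ≠ 0 from by omega, if_false, show s + 1 - s = 1 from by omega] at hfin
        have hfin2 : Q'.getVert s = Q'.getVert (k-1) := hfin.trans hend'.symm
        have := getVert_inj' Q' hQ' s (k-1) (by omega) (by omega) hfin2
        omega

lemma deadEnd1 (hk : 5 ≤ k) (hsat : IsSat (cycleGraph k) G) {e0 e1 a w : V}
    (q : G.Walk e0 e1) (hq : q.IsPath) (hs : k - 1 ≤ q.length)
    (hqdeg : ∀ j, j ≤ q.length → (G.neighborSet (q.getVert j)).ncard = 2)
    (hadeg : (G.neighborSet a).ncard = 2)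
    (hwa : G.Adj w a) (hwc : G.Adj w e0)
    (haq : ∀ j, j ≤ q.length → a ≠ q.getVert j)
    (hwq : ∀ j, j ≤ q.length → w ≠ q.getVert j) : False := by
  set s := q.length with hsdef
  have hs4 : 4 ≤ s := by omega
  have hvinj : ∀ i j, i ≤ s → j ≤ s → q.getVert i = q.getVert j → i = j := getVert_inj' q hq
  have hvadj : ∀ j, j < s → G.Adj (q.getVert j) (q.getVert (j+1)) := fun j hj => q.adj_getVert_succ hj
  have hwc' : G.Adj w (q.getVert 0) := by rwa [Walk.getVert_zero]
  have hwa' : w ≠ a := G.ne_of_adj hwa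
  have hNv0 : ∀ z, G.Adj (q.getVert 0) z → z = w ∨ z = q.getVert 1 :=
    fun z hz => two_nbrs (hqdeg 0 (by omega)) hwc'.symm (hvadj 0 (by omega))
      (hwq 1 (by omega)) hz
  have hNv1 : ∀ z, G.Adj (q.getVert 1) z → z = q.getVert 0 ∨ z = q.getVert 2 :=
    fun z hz => two_nbrs (hqdeg 1 (by omega)) (hvadj 0 (by omega)).symm (hvadj 1 (by omega))
      (fun hcon => by have := hvinj 0 2 (by omega) (by omega) hcon; omega) hz
  have hNvmid : ∀ j, 0 < j → j < s → ∀ z, G.Adj (q.getVert j) z → z = q.getVert (j-1) ∨ z = q.getVert (j+1) := by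
    intro j hj0 hjs z hz
    have hadj1 : G.Adj (q.getVert (j-1)) (q.getVert j) := by
      have := hvadj (j-1) (by omega)
      rwa [show j - 1 + 1 = j from by omega] at this
    exact two_nbrs (hqdeg j (by omega)) hadj1.symm (hvadj j hjs)
      (fun hcon => by have := hvinj (j-1) (j+1) (by omega) (by omega) hcon; omega) hz
  obtain ⟨x, hax, hxw, hNa⟩ := other_nbr hadeg hwa.symm
  by_cases hxv : x = q.getVert s
  · -- x = v s : pair (v 0, v 2)
    have hne : q.getVert 0 ≠ q.getVert 2 :=
      fun hcon => by have := hvinj 0 2 (by omega) (by omega) hcon; omega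
    have hnadj : ¬ G.Adj (q.getVert 0) (q.getVert 2) := by
      intro h
      rcases hNv0 _ h with h' | h'
      · exact hwq 2 (by omega) h'.symm
      · have := hvinj 2 1 (by omega) (by omega) h'; omega
    obtain ⟨Q, hQ, hQlen⟩ := exists_path_of_sat hk hsat.1 hne (hsat.2 _ _ hne hnadj)
    have hQrev : Q.reverse.IsPath := hQ.reverse
    have hQrevlen : Q.reverse.length = k - 1 := by rw [Walk.length_reverse, hQlen]
    have hz1adj : G.Adj (q.getVert 0) (Q.getVert 1) := by
      have := Q.adj_getVert_succ (i := 0) (by omega)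
      rwa [Walk.getVert_zero] at this
    have hend : Q.getVert (k-1) = q.getVert 2 := by rw [← hQlen]; exact Q.getVert_length
    rcases hNv0 _ hz1adj with hz | hz
    · -- succ = w ; now pred side
      have hz2adj : G.Adj (q.getVert 2) (Q.reverse.getVert 1) := by
        have := Q.reverse.adj_getVert_succ (i := 0) (by omega)
        rwa [Walk.getVert_zero] at this
      have hNv2 : ∀ z, G.Adj (q.getVert 2) z → z = q.getVert 1 ∨ z = q.getVert 3 :=
        fun z hz' => two_nbrs (hqdeg 2 (by omega)) (hvadj 1 (by omega)).symm (hvadj 2 (by omega))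
          (fun hcon => by have := hvinj 1 3 (by omega) (by omega) hcon; omega) hz'
      rcases hNv2 _ hz2adj with hz2 | hz2
      · -- pred = v 1
        have h1 : Q.getVert (k-2) = q.getVert 1 := by
          rw [Walk.getVert_reverse, hQlen] at hz2
          rwa [show k - 1 - 1 = k - 2 from by omega] at hz2
        have hadjv1 : G.Adj (q.getVert 1) (Q.getVert (k-3)) := by
          have := Q.adj_getVert_succ (i := k-3) (by omega)
          rw [show k - 3 + 1 = k - 2 from by omega, h1] at this
          exact this.symm
        rcases hNv1 _ hadjv1 with h' | h'
        · have h'' : Q.getVert (k-3) = Q.getVert 0 := h'.trans (Walk.getVert_zero Q).symm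
          have := getVert_inj' Q hQ (k-3) 0 (by omega) (by omega) h''
          omega
        · have h'' : Q.getVert (k-3) = Q.getVert (k-1) := h'.trans hend.symm
          have := getVert_inj' Q hQ (k-3) (k-1) (by omega) (by omega) h''
          omega
      · -- pred = v 3 : backward chain
        set f : ℕ → V := fun t => if t ≤ s - 2 then q.getVert (t+2) else if t = s - 1 then a else w
          with hfdef
        have hf1 : ∀ t, t ≤ s - 2 → f t = q.getVert (t+2) := by
          intro t ht; simp only [hfdef]; rw [if_pos ht]
        have hf2 : f (s-1) = a := by
          simp only [hfdef]; rw [if_neg (by omega : ¬ (s-1 ≤ s-2))]; simp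
        have hf3 : f s = w := by
          simp only [hfdef]; rw [if_neg (by omega : ¬ (s ≤ s-2)), if_neg (by omega : ¬ (s = s-1))]
        have hfv : ∀ t, t < s → (t = s - 1 ∧ f t = a) ∨ (t ≤ s - 2 ∧ f t = q.getVert (t+2)) := by
          intro t ht
          rcases le_or_gt t (s-2) with h' | h'
          · exact Or.inr ⟨h', hf1 t h'⟩
          · exact Or.inl ⟨by omega, by rw [show t = s - 1 from by omega]; exact hf2⟩
        have hchain : ∀ t, t ≤ s → Q.reverse.getVert t = f t := by
          apply chain_forced Q.reverse hQrev f s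
          · intro t ht
            rcases Nat.lt_trichotomy t (s-2) with h' | h' | h'
            · rw [hf1 t (by omega), hf1 (t+1) (by omega)]
              exact hvadj (t+2) (by omega)
            · rw [hf1 t (by omega), show t + 2 = s from by omega,
                show t + 1 = s - 1 from by omega, hf2]
              rw [hxv] at hax
              exact hax.symm
            · rw [show t = s - 1 from by omega, hf2, show s - 1 + 1 = s from by omega, hf3]
              exact hwa.symm
          · intro t ht0 hts
            rcases hfv t hts with ⟨_, h2⟩ | ⟨_, h2⟩
            · rw [h2]; exact hadeg
            · rw [h2]; exact hqdeg (t+2) (by omega)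
          · intro t t' ht ht' h
            have key : ∀ u, u ≤ s → f u = f u →
              (u ≤ s - 2 ∧ f u = q.getVert (u+2)) ∨ (u = s-1 ∧ f u = a) ∨ (u = s ∧ f u = w) := by
              intro u hu _
              rcases le_or_gt u (s-2) with h' | h'
              · exact Or.inl ⟨h', hf1 u h'⟩
              · rcases Nat.lt_or_ge u s with h'' | h''
                · exact Or.inr (Or.inl ⟨by omega, by rw [show u = s-1 from by omega, hf2]⟩)
                · exact Or.inr (Or.inr ⟨by omega, by rw [show u = s from by omega, hf3]⟩)
            rcases key t ht rfl with ⟨c1, e1⟩ | ⟨c1, e1⟩ | ⟨c1, e1⟩ <;>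
              rcases key t' ht' rfl with ⟨c2, e2⟩ | ⟨c2, e2⟩ | ⟨c2, e2⟩ <;>
              rw [e1, e2] at h
            · have := hvinj (t+2) (t'+2) (by omega) (by omega) h; omega
            · exact absurd h.symm (haq (t+2) (by omega))
            · exact absurd h.symm (hwq (t+2) (by omega))
            · exact absurd h (haq (t'+2) (by omega))
            · omega
            · exact absurd h hwa'.symm
            · exact absurd h (hwq (t'+2) (by omega))
            · exact absurd h hwa'
            · omega
          · intro t ht
            rcases hfv t ht with ⟨_, h2⟩ | ⟨c2, h2⟩
            · rw [h2]; exact haq 0 (by omega)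
            · rw [h2]
              intro hcon
              have := hvinj (t+2) 0 (by omega) (by omega) hcon; omega
          · rw [hf1 0 (by omega)]
          · intro _
            rw [hf1 1 (by omega)]
            exact hz2
        have hfin := hchain (k-1) (by omega)
        have hrevend : Q.reverse.getVert (k-1) = q.getVert 0 := by
          rw [← hQrevlen]; exact Q.reverse.getVert_length
        rw [hrevend] at hfin
        rcases Nat.lt_trichotomy (k-1) (s-1) with c1 | c1 | c1
        · rw [hf1 (k-1) (by omega)] at hfin
          have := hvinj 0 (k-1+2) (by omega) (by omega) hfin; omega
        · rw [c1, hf2] at hfin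
          exact haq 0 (by omega) hfin.symm
        · rw [show k - 1 = s from by omega, hf3] at hfin
          exact hwq 0 (by omega) hfin.symm
    · -- succ = v 1 : quick contradiction
      have hv1pos : Q.getVert 1 = q.getVert 1 := hz
      have hadj2 : G.Adj (q.getVert 1) (Q.getVert 2) := by
        have := Q.adj_getVert_succ (i := 1) (by omega)
        rwa [hv1pos] at this
      rcases hNv1 _ hadj2 with h' | h'
      · have h'' : Q.getVert 2 = Q.getVert 0 := h'.trans (Walk.getVert_zero Q).symm
        have := getVert_inj' Q hQ 2 0 (by omega) (by omega) h''
        omega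
      · have h'' : Q.getVert 2 = Q.getVert (k-1) := h'.trans hend.symm
        have := getVert_inj' Q hQ 2 (k-1) (by omega) (by omega) h''
        omega
  · -- x ≠ v s : pair (x, v 0)
    have hxvt : ∀ t, t < s → x ≠ q.getVert t := by
      intro t hts hcon
      rw [hcon] at hax
      rcases Nat.eq_zero_or_pos t with ht0 | ht0
      · subst ht0
        rcases hNv0 a hax.symm with h' | h'
        · exact hwa' h'.symm
        · exact haq 1 (by omega) h'
      · rcases hNvmid t ht0 hts a hax.symm with h' | h'
        · exact haq (t-1) (by omega) h'
        · exact haq (t+1) (by omega) h'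
    have hne : x ≠ q.getVert 0 := hxvt 0 (by omega)
    have hnadj : ¬ G.Adj x (q.getVert 0) := by
      intro h
      rcases hNv0 _ h.symm with h' | h'
      · exact hxw h'
      · rw [h'] at hax
        rcases hNv1 a hax.symm with h'' | h''
        · exact haq 0 (by omega) h''
        · exact haq 2 (by omega) h''
    obtain ⟨Q, hQ, hQlen⟩ := exists_path_of_sat hk hsat.1 hne (hsat.2 _ _ hne hnadj)
    have hQrev : Q.reverse.IsPath := hQ.reverse
    have hQrevlen : Q.reverse.length = k - 1 := by rw [Walk.length_reverse, hQlen]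
    have hz1adj : G.Adj (q.getVert 0) (Q.reverse.getVert 1) := by
      have := Q.reverse.adj_getVert_succ (i := 0) (by omega)
      rwa [Walk.getVert_zero] at this
    rcases hNv0 _ hz1adj with hz | hz
    · -- pred = w : build a C_k
      have hwpos : Q.getVert (k-2) = w := by
        rw [Walk.getVert_reverse, hQlen] at hz
        rwa [show k - 1 - 1 = k - 2 from by omega] at hz
      have hanotin : a ∉ Q.support := by
        intro hmem
        obtain ⟨m, hm, hmle⟩ := Walk.mem_support_iff_exists_getVert.mp hmem
        rw [hQlen] at hmle
        have hm0 : m ≠ 0 := by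
          intro h0; subst h0
          rw [Walk.getVert_zero] at hm
          exact (G.ne_of_adj hax) hm.symm
        have hmL : m ≠ k-1 := by
          intro hL; subst hL
          have : Q.getVert (k-1) = q.getVert 0 := by rw [← hQlen]; exact Q.getVert_length
          rw [hm] at this
          exact haq 0 (by omega) this
        have hn2 : G.Adj a (Q.getVert (m+1)) := by
          have := Q.adj_getVert_succ (i := m) (by omega)
          rwa [hm] at this
        have hn1 : G.Adj a (Q.getVert (m-1)) := by
          have := Q.adj_getVert_succ (i := m-1) (by omega)
          rw [show m - 1 + 1 = m from by omega, hm] at this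
          exact this.symm
        have hm2 : m + 1 = k - 2 := by
          rcases hNa _ hn2 with h' | h'
          · have := getVert_inj' Q hQ (m+1) (k-2) (by omega) (by omega) (h'.trans hwpos.symm)
            omega
          · have h'' : Q.getVert (m+1) = Q.getVert 0 := h'.trans (Walk.getVert_zero Q).symm
            have := getVert_inj' Q hQ (m+1) 0 (by omega) (by omega) h''
            omega
        rcases hNa _ hn1 with h' | h'
        · have := getVert_inj' Q hQ (m-1) (k-2) (by omega) (by omega) (h'.trans hwpos.symm)
          omega
        · have h'' : Q.getVert (m-1) = Q.getVert 0 := h'.trans (Walk.getVert_zero Q).symm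
          have := getVert_inj' Q hQ (m-1) 0 (by omega) (by omega) h''
          omega
      apply hsat.1
      apply hasCopy_of_cycle hk G (fun t => if t ≤ k-2 then Q.getVert t else a)
      · intro i hi
        rcases Nat.lt_or_ge i (k-2) with h' | h'
        · rw [if_pos (by omega), if_pos (by omega)]
          exact Q.adj_getVert_succ (by omega)
        · have hieq : i = k - 2 := by omega
          subst hieq
          rw [if_pos (by omega), if_neg (by omega), hwpos]
          exact hwa
      · rw [if_neg (by omega), if_pos (by omega), Walk.getVert_zero]
        exact hax
      · intro i j hi hj hij
        rcases le_or_gt i (k-2) with h1 | h1 <;> rcases le_or_gt j (k-2) with h2 | h2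
        · rw [if_pos h1, if_pos h2] at hij
          exact getVert_inj' Q hQ i j (by omega) (by omega) hij
        · rw [if_pos h1, if_neg (by omega)] at hij
          exact absurd (hij ▸ getVert_mem_support' Q (by omega)) hanotin
        · rw [if_neg (by omega), if_pos h2] at hij
          exact absurd (hij ▸ getVert_mem_support' Q (by omega) : a ∈ Q.support) hanotin
        · omega
    · -- pred = v 1 : backward chain
      have hchain : ∀ t, t ≤ s → Q.reverse.getVert t = q.getVert t := by
        apply chain_forced Q.reverse hQrev (fun j => q.getVert j) s hvadj
          (fun t ht0 hts => hqdeg t (by omega))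
          (fun t t' ht ht' h => hvinj t t' ht ht' h)
          (fun t ht => Ne.symm (hxvt t ht))
          rfl (fun _ => hz)
      have hfin := hchain (k-1) (by omega)
      have hrevend : Q.reverse.getVert (k-1) = x := by
        rw [← hQrevlen]; exact Q.reverse.getVert_length
      rw [hrevend] at hfin
      rcases lt_or_ge (k-1) s with h' | h'
      · exact hxvt (k-1) h' hfin
      · have : k - 1 = s := by omega
        rw [← this] at hxv
        exact hxv hfin

lemma killer (hk : 5 ≤ k) (hsat : IsSat (cycleGraph k) G) {a b c d w : V}
    (p : G.Walk a b) (q : G.Walk c d) (hp : p.IsPath) (hq : q.IsPath)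
    (hr : 1 ≤ p.length) (hs : 1 ≤ q.length)
    (hpdeg : ∀ i, i ≤ p.length → (G.neighborSet (p.getVert i)).ncard = 2)
    (hqdeg : ∀ j, j ≤ q.length → (G.neighborSet (q.getVert j)).ncard = 2)
    (huv : ∀ i, i ≤ p.length → ∀ j, j ≤ q.length → p.getVert i ≠ q.getVert j)
    (hw1 : G.Adj w a) (hw2 : G.Adj w c)
    (hwp : ∀ i, i ≤ p.length → w ≠ p.getVert i)
    (hwq : ∀ j, j ≤ q.length → w ≠ q.getVert j)
    (hlen : p.length + q.length = k - 1)
    (hrs : G.Adj (p.getVert p.length) (q.getVert q.length)) : False := by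
  set r := p.length with hrdef
  set s := q.length with hsdef
  have huinj : ∀ i j, i ≤ r → j ≤ r → p.getVert i = p.getVert j → i = j := getVert_inj' p hp
  have hvinj : ∀ i j, i ≤ s → j ≤ s → q.getVert i = q.getVert j → i = j := getVert_inj' q hq
  have huadj : ∀ i, i < r → G.Adj (p.getVert i) (p.getVert (i+1)) := fun i hi => p.adj_getVert_succ hi
  have hvadj : ∀ j, j < s → G.Adj (q.getVert j) (q.getVert (j+1)) := fun j hj => q.adj_getVert_succ hj
  have ha0 : p.getVert 0 = a := Walk.getVert_zero p
  have hc0 : q.getVert 0 = c := Walk.getVert_zero q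
  have hadeg : (G.neighborSet a).ncard = 2 := by
    have := hpdeg 0 (by omega); rwa [ha0] at this
  have hcdeg : (G.neighborSet c).ncard = 2 := by
    have := hqdeg 0 (by omega); rwa [hc0] at this
  have hpa1 : G.Adj a (p.getVert 1) := by
    have := huadj 0 (by omega); rwa [ha0] at this
  have hqc1 : G.Adj c (q.getVert 1) := by
    have := hvadj 0 (by omega); rwa [hc0] at this
  have hNa : ∀ z, G.Adj a z → z = p.getVert 1 ∨ z = w :=
    fun z hz => two_nbrs hadeg hpa1 hw1.symm (Ne.symm (hwp 1 (by omega))) hz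
  have hNc : ∀ z, G.Adj c z → z = w ∨ z = q.getVert 1 :=
    fun z hz => two_nbrs hcdeg hw2.symm hqc1 (hwq 1 (by omega)) hz
  have hne : a ≠ c := by
    rw [← ha0, ← hc0]; exact huv 0 (by omega) 0 (by omega)
  have hnadj : ¬ G.Adj a c := by
    intro h
    rcases hNa c h with h' | h'
    · exact huv 1 (by omega) 0 (by omega) (by rw [hc0, h'])
    · exact hwq 0 (by omega) (by rw [hc0, h'])
  obtain ⟨Q, hQ, hQlen⟩ := exists_path_of_sat hk hsat.1 hne (hsat.2 a c hne hnadj)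
  have hz1adj : G.Adj a (Q.getVert 1) := by
    have := Q.adj_getVert_succ (i := 0) (by omega)
    rwa [Walk.getVert_zero] at this
  have hendQ : Q.getVert (k-1) = c := by rw [← hQlen]; exact Q.getVert_length
  rcases hNa _ hz1adj with hz | hz
  · -- succ = u 1 : full forward chain, ends at v 1 ≠ v 0, contradiction
    set f : ℕ → V := fun t => if t ≤ r then p.getVert t else q.getVert (k - t) with hfdef
    have hf1 : ∀ t, t ≤ r → f t = p.getVert t := by
      intro t ht; simp only [hfdef]; rw [if_pos ht]
    have hf2 : ∀ t, r < t → f t = q.getVert (k - t) := by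
      intro t ht; simp only [hfdef]; rw [if_neg (by omega)]
    have hchain : ∀ t, t ≤ k-1 → Q.getVert t = f t := by
      apply chain_forced Q hQ f (k-1)
      · intro t ht
        rcases Nat.lt_trichotomy t r with h' | h' | h'
        · rw [hf1 t (by omega), hf1 (t+1) (by omega)]
          exact huadj t h'
        · rw [hf1 t (by omega), hf2 (t+1) (by omega), h',
            show k - (r+1) = s from by omega]
          exact hrs
        · rw [hf2 t (by omega), hf2 (t+1) (by omega)]
          have : k - t = (k - (t+1)) + 1 := by omega
          rw [this]
          exact (hvadj (k - (t+1)) (by omega)).symm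
      · intro t ht0 hts
        rcases le_or_gt t r with h' | h'
        · rw [hf1 t h']; exact hpdeg t (by omega)
        · rw [hf2 t h']; exact hqdeg (k-t) (by omega)
      · intro t t' ht ht' h
        rcases le_or_gt t r with h1 | h1 <;> rcases le_or_gt t' r with h2 | h2
        · rw [hf1 t h1, hf1 t' h2] at h
          exact huinj t t' (by omega) (by omega) h
        · rw [hf1 t h1, hf2 t' h2] at h
          exact absurd h (huv t (by omega) (k-t') (by omega))
        · rw [hf2 t h1, hf1 t' h2] at h
          exact absurd h.symm (huv t' (by omega) (k-t) (by omega))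
        · rw [hf2 t h1, hf2 t' h2] at h
          have := hvinj (k-t) (k-t') (by omega) (by omega) h
          omega
      · intro t ht
        rcases le_or_gt t r with h' | h'
        · rw [hf1 t h']
          intro hcon
          exact huv t (by omega) 0 (by omega) (by rw [hcon, hc0])
        · rw [hf2 t h']
          intro hcon
          have := hvinj (k-t) 0 (by omega) (by omega) (hcon.trans hc0.symm)
          omega
      · rw [hf1 0 (by omega), ha0]
      · intro _
        rw [hf1 1 (by omega)]
        exact hz
    have hfin := hchain (k-1) le_rfl
    rw [hendQ, hf2 (k-1) (by omega), show k - (k-1) = 1 from by omega] at hfin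
    have := hvinj 0 1 (by omega) (by omega) (hc0.trans hfin)
    omega
  · -- succ = w : look at the predecessor of c
    have hQrev : Q.reverse.IsPath := hQ.reverse
    have hQrevlen : Q.reverse.length = k - 1 := by rw [Walk.length_reverse, hQlen]
    have hz2adj : G.Adj c (Q.reverse.getVert 1) := by
      have := Q.reverse.adj_getVert_succ (i := 0) (by omega)
      rwa [Walk.getVert_zero] at this
    rcases hNc _ hz2adj with hz2 | hz2
    · -- pred = w : w appears twice
      have h1 : Q.getVert (k-2) = w := by
        rw [Walk.getVert_reverse, hQlen] at hz2
        rwa [show k - 1 - 1 = k - 2 from by omega] at hz2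
      have h2 : Q.getVert (k-2) = Q.getVert 1 := by rw [h1, hz]
      have := getVert_inj' Q hQ (k-2) 1 (by omega) (by omega) h2
      omega
    · -- pred = v 1 : full backward chain, ends at u 1 ≠ u 0
      set f : ℕ → V := fun t => if t ≤ s then q.getVert t else p.getVert (k - t) with hfdef
      have hf1 : ∀ t, t ≤ s → f t = q.getVert t := by
        intro t ht; simp only [hfdef]; rw [if_pos ht]
      have hf2 : ∀ t, s < t → f t = p.getVert (k - t) := by
        intro t ht; simp only [hfdef]; rw [if_neg (by omega)]
      have hchain : ∀ t, t ≤ k-1 → Q.reverse.getVert t = f t := by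
        apply chain_forced Q.reverse hQrev f (k-1)
        · intro t ht
          rcases Nat.lt_trichotomy t s with h' | h' | h'
          · rw [hf1 t (by omega), hf1 (t+1) (by omega)]
            exact hvadj t h'
          · rw [hf1 t (by omega), hf2 (t+1) (by omega), h',
              show k - (s+1) = r from by omega]
            exact hrs.symm
          · rw [hf2 t (by omega), hf2 (t+1) (by omega)]
            have : k - t = (k - (t+1)) + 1 := by omega
            rw [this]
            exact (huadj (k - (t+1)) (by omega)).symm
        · intro t ht0 hts
          rcases le_or_gt t s with h' | h'
          · rw [hf1 t h']; exact hqdeg t (by omega)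
          · rw [hf2 t h']; exact hpdeg (k-t) (by omega)
        · intro t t' ht ht' h
          rcases le_or_gt t s with h1 | h1 <;> rcases le_or_gt t' s with h2 | h2
          · rw [hf1 t h1, hf1 t' h2] at h
            exact hvinj t t' (by omega) (by omega) h
          · rw [hf1 t h1, hf2 t' h2] at h
            exact absurd h.symm (huv (k-t') (by omega) t (by omega))
          · rw [hf2 t h1, hf1 t' h2] at h
            exact absurd h (huv (k-t) (by omega) t' (by omega))
          · rw [hf2 t h1, hf2 t' h2] at h
            have := huinj (k-t) (k-t') (by omega) (by omega) h
            omega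
        · intro t ht
          rcases le_or_gt t s with h' | h'
          · rw [hf1 t h']
            intro hcon
            exact huv 0 (by omega) t (by omega) (by rw [ha0, hcon])
          · rw [hf2 t h']
            intro hcon
            have := huinj (k-t) 0 (by omega) (by omega) (hcon.trans ha0.symm)
            omega
        · rw [hf1 0 (by omega), hc0]
        · intro _
          rw [hf1 1 (by omega)]
          exact hz2
      have hfin := hchain (k-1) le_rfl
      have hrevend : Q.reverse.getVert (k-1) = a := by
        rw [← hQrevlen]; exact Q.reverse.getVert_length
      rw [hrevend, hf2 (k-1) (by omega), show k - (k-1) = 1 from by omega] at hfin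
      have := huinj 0 1 (by omega) (by omega) (ha0.trans hfin)
      omega

end Main

theorem path_from_common_neighbor
    (k : ℕ) (hk : 5 ≤ k) (V : Type) [Fintype V] (G : SimpleGraph V)
    (hsat : IsSat (cycleGraph k) G)
    (u₀ uᵣ v₀ vₛ : V) (p : G.Walk u₀ uᵣ) (q : G.Walk v₀ vₛ)
    (hp : p.IsPath) (hq : q.IsPath)
    (hdisj : ∀ v ∈ p.support, v ∉ q.support)
    (hpdeg : ∀ v ∈ p.support, (G.neighborSet v).ncard = 2)
    (hqdeg : ∀ v ∈ q.support, (G.neighborSet v).ncard = 2)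
    (hlen : k - 1 ≤ p.length + q.length)
    (w : V) (hw₁ : G.Adj w u₀) (hw₂ : G.Adj w v₀) :
    ∃ R : G.Walk w uᵣ, R.IsPath ∧ R.length = k - p.length - 3 ∧ u₀ ∉ R.support := by
  set r := p.length with hrdef
  set s := q.length with hsdef
  have huinj : ∀ i j, i ≤ r → j ≤ r → p.getVert i = p.getVert j → i = j := getVert_inj' p hp
  have hvinj : ∀ i j, i ≤ s → j ≤ s → q.getVert i = q.getVert j → i = j := getVert_inj' q hq
  have huadj : ∀ i, i < r → G.Adj (p.getVert i) (p.getVert (i+1)) := fun i hi => p.adj_getVert_succ hi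
  have hvadj : ∀ j, j < s → G.Adj (q.getVert j) (q.getVert (j+1)) := fun j hj => q.adj_getVert_succ hj
  have hudeg : ∀ i, i ≤ r → (G.neighborSet (p.getVert i)).ncard = 2 :=
    fun i hi => hpdeg _ (getVert_mem_support' p hi)
  have hvdeg : ∀ j, j ≤ s → (G.neighborSet (q.getVert j)).ncard = 2 :=
    fun j hj => hqdeg _ (getVert_mem_support' q hj)
  have huv : ∀ i, i ≤ r → ∀ j, j ≤ s → p.getVert i ≠ q.getVert j := by
    intro i hi j hj hcon
    exact hdisj _ (getVert_mem_support' p hi) (hcon ▸ getVert_mem_support' q hj)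
  have hu0 : p.getVert 0 = u₀ := Walk.getVert_zero p
  have hur : p.getVert r = uᵣ := p.getVert_length
  have hv0 : q.getVert 0 = v₀ := Walk.getVert_zero q
  have hadegu : (G.neighborSet u₀).ncard = 2 := by have := hudeg 0 (by omega); rwa [hu0] at this
  have hadegv : (G.neighborSet v₀).ncard = 2 := by have := hvdeg 0 (by omega); rwa [hv0] at this
  have huvq : ∀ j, j ≤ s → u₀ ≠ q.getVert j := by
    intro j hj; rw [← hu0]; exact huv 0 (by omega) j hj
  have hvup : ∀ i, i ≤ r → v₀ ≠ p.getVert i := by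
    intro i hi; rw [← hv0]; exact fun hcon => huv i hi 0 (by omega) hcon.symm
  have hNpmid : ∀ i, 0 < i → i < r → ∀ z, G.Adj (p.getVert i) z →
      z = p.getVert (i-1) ∨ z = p.getVert (i+1) := by
    intro i hi0 hir z hz
    have hadj1 : G.Adj (p.getVert (i-1)) (p.getVert i) := by
      have := huadj (i-1) (by omega)
      rwa [show i - 1 + 1 = i from by omega] at this
    exact two_nbrs (hudeg i (by omega)) hadj1.symm (huadj i hir)
      (fun hcon => by have := huinj (i-1) (i+1) (by omega) (by omega) hcon; omega) hz
  have hNvmid : ∀ j, 0 < j → j < s → ∀ z, G.Adj (q.getVert j) z →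
      z = q.getVert (j-1) ∨ z = q.getVert (j+1) := by
    intro j hj0 hjs z hz
    have hadj1 : G.Adj (q.getVert (j-1)) (q.getVert j) := by
      have := hvadj (j-1) (by omega)
      rwa [show j - 1 + 1 = j from by omega] at this
    exact two_nbrs (hvdeg j (by omega)) hadj1.symm (hvadj j hjs)
      (fun hcon => by have := hvinj (j-1) (j+1) (by omega) (by omega) hcon; omega) hz
  -- Step 1 : w is not on p
  have hwp : ∀ i, i ≤ r → w ≠ p.getVert i := by
    intro i hile hcon
    rcases Nat.eq_zero_or_pos i with hi0 | hi0
    · subst hi0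
      rw [hu0] at hcon
      exact G.ne_of_adj hw₁ hcon
    rcases Nat.lt_or_ge i r with hir | hir
    · -- interior vertex
      have : G.Adj (p.getVert i) v₀ := by rw [← hcon]; exact hw₂
      rcases hNpmid i hi0 hir v₀ this with h' | h'
      · exact hvup (i-1) (by omega) h'
      · exact hvup (i+1) (by omega) h'
    · have hieq : i = r := by omega
      subst hieq
      have hr1 : 1 ≤ r := hi0
      have hadjr : G.Adj (p.getVert r) (p.getVert (r-1)) := by
        have := huadj (r-1) (by omega)
        rw [show r - 1 + 1 = r from by omega] at this
        exact this.symm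
      have hadjv : G.Adj (p.getVert r) v₀ := by rw [← hcon]; exact hw₂
      have hadju : G.Adj (p.getVert r) u₀ := by rw [← hcon]; exact hw₁
      rcases two_nbrs (hudeg r le_rfl) hadjr hadjv
        (fun hcon2 => hvup (r-1) (by omega) hcon2.symm) hadju with h' | h'
      · -- u₀ = p.getVert (r-1) forces r = 1, the deadEnd2 configuration
        have hreq : r = 1 := by
          have := huinj 0 (r-1) (by omega) (by omega) (hu0.trans h')
          omega
        refine deadEnd2 (a := u₀) (c := w) hk hsat q hq (by omega) hvdeg hadegu
          ?_ hw₁.symm hw₂ huvq ?_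
        · rw [hcon]; exact hudeg r le_rfl
        · intro j hj; rw [hcon, hreq]; exact huv 1 (by omega) j hj
      · exact huvq 0 (by omega) (h'.trans hv0.symm)
  -- Step 2 : w is not on q
  have hwq : ∀ j, j ≤ s → w ≠ q.getVert j := by
    intro j hjle hcon
    rcases Nat.eq_zero_or_pos j with hj0 | hj0
    · subst hj0
      rw [hv0] at hcon
      exact G.ne_of_adj hw₂ hcon
    rcases Nat.lt_or_ge j s with hjs | hjs
    · have : G.Adj (q.getVert j) u₀ := by rw [← hcon]; exact hw₁
      rcases hNvmid j hj0 hjs u₀ this with h' | h'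
      · exact huvq (j-1) (by omega) h'
      · exact huvq (j+1) (by omega) h'
    · have hjeq : j = s := by omega
      subst hjeq
      have hs1 : 1 ≤ s := hj0
      have hadjs : G.Adj (q.getVert s) (q.getVert (s-1)) := by
        have := hvadj (s-1) (by omega)
        rw [show s - 1 + 1 = s from by omega] at this
        exact this.symm
      have hadju : G.Adj (q.getVert s) u₀ := by rw [← hcon]; exact hw₁
      have hadjv : G.Adj (q.getVert s) v₀ := by rw [← hcon]; exact hw₂
      rcases two_nbrs (hvdeg s le_rfl) hadjs hadju
        (fun hcon2 => huvq (s-1) (by omega) hcon2.symm) hadjv with h' | h'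
      · -- v₀ = q.getVert (s-1) forces s = 1, deadEnd2 with p
        have hseq : s = 1 := by
          have := hvinj 0 (s-1) (by omega) (by omega) (hv0.trans h')
          omega
        refine deadEnd2 (a := v₀) (c := w) hk hsat p hp (by omega) hudeg hadegv
          ?_ hw₂.symm hw₁ hvup ?_
        · rw [hcon]; exact hvdeg s le_rfl
        · intro i hi; rw [hcon, hseq]; exact fun hcc => huv i hi 1 (by omega) hcc.symm
      · exact huvq 0 (by omega) (h'.symm.trans hv0.symm)
  -- Step 3 : degenerate cases r = 0 and s = 0
  rcases Nat.eq_zero_or_pos r with hr0 | hr1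
  · exact absurd (deadEnd1 hk hsat q hq (by omega) hvdeg hadegu hw₁ hw₂ huvq hwq) id
  rcases Nat.eq_zero_or_pos s with hs0 | hs1
  · exact absurd (deadEnd1 hk hsat p hp (by omega) hudeg hadegv hw₂ hw₁ hvup hwp) id
  -- Main case : r ≥ 1 and s ≥ 1
  have hpu1 : G.Adj u₀ (p.getVert 1) := by
    have := huadj 0 (by omega); rwa [hu0] at this
  have hqv1 : G.Adj v₀ (q.getVert 1) := by
    have := hvadj 0 (by omega); rwa [hv0] at this
  have hNu0 : ∀ z, G.Adj u₀ z → z = p.getVert 1 ∨ z = w :=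
    fun z hz => two_nbrs hadegu hpu1 hw₁.symm (Ne.symm (hwp 1 (by omega))) hz
  have hNv0 : ∀ z, G.Adj v₀ z → z = w ∨ z = q.getVert 1 :=
    fun z hz => two_nbrs hadegv hw₂.symm hqv1 (hwq 1 (by omega)) hz
  have hne : u₀ ≠ q.getVert 1 := huvq 1 (by omega)
  have hnadj : ¬ G.Adj u₀ (q.getVert 1) := by
    intro h
    rcases hNu0 _ h with h' | h'
    · exact huv 1 (by omega) 1 (by omega) h'.symm
    · exact hwq 1 (by omega) h'.symm
  obtain ⟨Q, hQ, hQlen⟩ := exists_path_of_sat hk hsat.1 hne (hsat.2 _ _ hne hnadj)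
  have hQrev : Q.reverse.IsPath := hQ.reverse
  have hQrevlen : Q.reverse.length = k - 1 := by rw [Walk.length_reverse, hQlen]
  have hendQ : Q.getVert (k-1) = q.getVert 1 := by rw [← hQlen]; exact Q.getVert_length
  have hz1 : G.Adj u₀ (Q.getVert 1) := by
    have := Q.adj_getVert_succ (i := 0) (by omega)
    rwa [Walk.getVert_zero] at this
  rcases hNu0 _ hz1 with hzA | hzB
  · -- Branch A : the walk starts along p
    have hforward : ∀ t, t ≤ r → Q.getVert t = p.getVert t := by
      apply chain_forced Q hQ (fun t => p.getVert t) r huadj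
        (fun t ht0 htr => hudeg t (by omega)) huinj
        (fun t ht => huv t (by omega) 1 (by omega)) hu0 (fun _ => hzA)
    have hrL : r < k - 1 := by
      by_contra hcon
      have h1 := hforward (k-1) (by omega)
      rw [hendQ] at h1
      exact huv (k-1) (by omega) 1 (by omega) h1.symm
    have hvs1adj : G.Adj (q.getVert s) (q.getVert (s-1)) := by
      have := hvadj (s-1) (by omega)
      rw [show s - 1 + 1 = s from by omega] at this
      exact this.symm
    obtain ⟨y, hy, hyne, hyall⟩ := other_nbr (hvdeg s le_rfl) hvs1adj
    set f : ℕ → V := fun t => if t ≤ s - 1 then q.getVert (t+1) else y with hfdef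
    have hf1 : ∀ t, t ≤ s - 1 → f t = q.getVert (t+1) := by
      intro t ht; simp only [hfdef]; rw [if_pos ht]
    have hf2 : f s = y := by
      simp only [hfdef]; rw [if_neg (by omega)]
    have hN1 : ∀ z, G.Adj (q.getVert 1) z → z = q.getVert 0 ∨ z = f 1 := by
      intro z hz
      rcases Nat.lt_or_ge 1 s with hs2 | hs2
      · rw [hf1 1 (by omega)]
        exact two_nbrs (hvdeg 1 (by omega)) (hvadj 0 (by omega)).symm (hvadj 1 hs2)
          (fun hcon => by have := hvinj 0 2 (by omega) (by omega) hcon; omega) hz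
      · have hseq : s = 1 := by omega
        have hz' : G.Adj (q.getVert s) z := by rwa [hseq]
        rcases hyall z hz' with h' | h'
        · left; rwa [show s - 1 = 0 from by omega] at h'
        · right
          have hfy : f 1 = y := by simp only [hfdef]; rw [if_neg (by omega)]
          rw [hfy]; exact h'
    have hz2 : G.Adj (q.getVert 1) (Q.reverse.getVert 1) := by
      have := Q.reverse.adj_getVert_succ (i := 0) (by omega)
      rwa [Walk.getVert_zero] at this
    rcases hN1 _ hz2 with hA1 | hA2
    · -- Branch A1 : predecessor of q.getVert 1 is v₀; extract the answer!
      have hchain2 : ∀ t, t ≤ 2 → Q.reverse.getVert t =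
          (fun t => if t = 0 then q.getVert 1 else if t = 1 then q.getVert 0 else w) t := by
        apply chain_forced Q.reverse hQrev _ 2
        · intro t ht
          interval_cases t
          · simp only [if_pos rfl, if_neg (one_ne_zero), if_pos rfl]
            exact (hvadj 0 (by omega)).symm
          · simp only [if_neg (one_ne_zero), if_pos rfl, if_neg (by omega : ¬(2 = 0)),
              if_neg (by omega : ¬(2 = 1))]
            rw [hv0]
            exact hw₂.symm
        · intro t ht0 ht2
          have ht1 : t = 1 := by omega
          subst ht1
          simp only [if_neg one_ne_zero, if_pos rfl]
          exact hvdeg 0 (by omega)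
        · intro t t' ht ht' h
          interval_cases t <;> interval_cases t' <;>
            simp only [if_pos rfl, if_neg one_ne_zero, if_neg (by omega : ¬(2 = 0)),
              if_neg (by omega : ¬(2 = 1))] at h <;>
            first
            | rfl
            | (exfalso; exact absurd h (fun hcc => by
                have := hvinj 1 0 (by omega) (by omega) hcc; omega))
            | (exfalso; exact absurd h.symm (fun hcc => by
                have := hvinj 1 0 (by omega) (by omega) hcc; omega))
            | (exfalso; exact hwq 1 (by omega) h.symm)
            | (exfalso; exact hwq 1 (by omega) h)
            | (exfalso; exact hwq 0 (by omega) h.symm)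
            | (exfalso; exact hwq 0 (by omega) h)
        · intro t ht
          interval_cases t
          · simp only [if_pos rfl]
            exact Ne.symm (huvq 1 (by omega))
          · simp only [if_neg one_ne_zero, if_pos rfl]
            exact Ne.symm (huvq 0 (by omega))
        · simp
        · intro _
          simp only [if_neg one_ne_zero, if_pos rfl]
          exact hA1
      have hwpos : Q.getVert (k-3) = w := by
        have := hchain2 2 le_rfl
        simp only [if_neg (by omega : ¬(2 = 0)), if_neg (by omega : ¬(2 = 1))] at this
        rw [Walk.getVert_reverse, hQlen] at this
        rwa [show k - 1 - 2 = k - 3 from by omega] at this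
      have hv0pos : Q.getVert (k-2) = q.getVert 0 := by
        rw [Walk.getVert_reverse, hQlen] at hA1
        rwa [show k - 1 - 1 = k - 2 from by omega] at hA1
      have hrk3 : r ≠ k - 3 := by
        intro hcon
        apply hwp r le_rfl
        rw [← hforward r le_rfl, hcon, hwpos]
      have hrk2 : r ≠ k - 2 := by
        intro hcon
        have h1 := hforward r le_rfl
        rw [hcon] at h1
        rw [hv0pos] at h1
        exact huv (k-2) (by omega) 0 (by omega) h1.symm
      have hrle : r ≤ k - 4 := by omega
      -- build the final path
      set m := k - 3 - r with hmdef
      set g : ℕ → V := fun t => Q.getVert (k - 3 - t) with hgdef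
      have hgadj : ∀ t, t < m → G.Adj (g t) (g (t+1)) := by
        intro t ht
        have hidx : k - 3 - (t+1) + 1 = k - 3 - t := by omega
        have := Q.adj_getVert_succ (i := k - 3 - (t+1)) (by omega)
        rw [hidx] at this
        exact this.symm
      have hg0 : g 0 = w := by
        simp only [hgdef]
        rw [show k - 3 - 0 = k - 3 from by omega]
        exact hwpos
      have hgm : g m = uᵣ := by
        simp only [hgdef]
        rw [show k - 3 - m = r from by omega, hforward r le_rfl, hur]
      refine ⟨(buildWalk G g m hgadj).copy hg0 hgm, ?_, ?_, ?_⟩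
      · rw [Walk.isPath_copy]
        apply buildWalk_isPath
        intro i j hi hj hij
        have := getVert_inj' Q hQ (k-3-i) (k-3-j) (by omega) (by omega) hij
        omega
      · rw [Walk.length_copy, buildWalk_length]
        omega
      · rw [Walk.support_copy]
        intro hmem
        obtain ⟨n, hn, hnle⟩ := Walk.mem_support_iff_exists_getVert.mp hmem
        rw [buildWalk_length] at hnle
        rw [buildWalk_getVert g m hgadj n hnle] at hn
        have hu0Q : Q.getVert 0 = u₀ := Walk.getVert_zero Q
        have := getVert_inj' Q hQ (k-3-n) 0 (by omega) (by omega) (hn.trans hu0Q.symm)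
        omega
    · -- Branch A2 : forced all the way; killer configuration
      exfalso
      have hyvj : ∀ j, 1 ≤ j → j ≤ s → y ≠ q.getVert j := by
        intro j hj1 hjs hcon
        rcases Nat.lt_or_ge j (s-1) with h' | h'
        · rw [hcon] at hy
          rcases hNvmid j (by omega) (by omega) _ hy.symm with h'' | h''
          · have := hvinj s (j-1) (by omega) (by omega) h''; omega
          · have := hvinj s (j+1) (by omega) (by omega) h''; omega
        · rcases Nat.lt_or_ge j s with h'' | h''
          · have hjeq : j = s - 1 := by omega
            rw [hjeq] at hcon
            exact hyne hcon
          · have hjeq : j = s := by omega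
            rw [hjeq] at hcon
            exact (G.ne_of_adj hy).symm hcon
      have hback : ∀ t, t ≤ s → Q.reverse.getVert t = f t := by
        apply chain_forced Q.reverse hQrev f s
        · intro t ht
          rcases Nat.lt_or_ge t (s-1) with h' | h'
          · rw [hf1 t (by omega), hf1 (t+1) (by omega)]
            exact hvadj (t+1) (by omega)
          · have hteq : t = s - 1 := by omega
            rw [hf1 t (by omega), hteq, show s - 1 + 1 = s from by omega, hf2]
            exact hy
        · intro t ht0 hts
          rw [hf1 t (by omega)]
          exact hvdeg (t+1) (by omega)
        · intro t t' ht ht' h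
          rcases Nat.lt_or_ge t s with h1 | h1 <;> rcases Nat.lt_or_ge t' s with h2 | h2
          · rw [hf1 t (by omega), hf1 t' (by omega)] at h
            have := hvinj (t+1) (t'+1) (by omega) (by omega) h
            omega
          · have ht'eq : t' = s := by omega
            rw [hf1 t (by omega), ht'eq, hf2] at h
            exact absurd h.symm (hyvj (t+1) (by omega) (by omega))
          · have hteq : t = s := by omega
            rw [hteq, hf2, hf1 t' (by omega)] at h
            exact absurd h (hyvj (t'+1) (by omega) (by omega))
          · omega
        · intro t ht
          rw [hf1 t (by omega)]
          exact Ne.symm (huvq (t+1) (by omega))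
        · rw [hf1 0 (by omega)]
        · intro _
          exact hA2
      rcases Nat.lt_or_ge s (k-1) with hsL | hsL
      · -- s < k - 1 : the escape vertex y is on p, must be p.getVert r
        have hj0 : 1 ≤ k - 1 - s ∧ k - 1 - s ≤ r := by omega
        have hss := hback s le_rfl
        rw [hf2, Walk.getVert_reverse, hQlen] at hss
        have hyu : y = p.getVert (k-1-s) := by
          rw [← hss, hforward (k-1-s) (by omega)]
        have hadjy : G.Adj (p.getVert (k-1-s)) (q.getVert s) := by
          rw [← hyu]; exact hy.symm
        have hjr : k - 1 - s = r := by
          by_contra hcon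
          rcases hNpmid (k-1-s) (by omega) (by omega) _ hadjy with h' | h'
          · exact huv (k-1-s-1) (by omega) s le_rfl h'.symm
          · exact huv (k-1-s+1) (by omega) s le_rfl h'.symm
        exact killer hk hsat p q hp hq hr1 hs1 hudeg hvdeg huv hw₁ hw₂ hwp hwq
          (by omega) (by show G.Adj (p.getVert r) (q.getVert s); rw [← hjr]; exact hadjy)
      · -- s ≥ k - 1 : contradiction at position k-1
        have h1 := hback (k-1) (by omega)
        have h2 : Q.reverse.getVert (k-1) = u₀ := by
          rw [← hQrevlen]; exact Q.reverse.getVert_length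
        rw [h2] at h1
        rcases Nat.lt_or_ge (k-1) s with h' | h'
        · rw [hf1 (k-1) (by omega)] at h1
          exact huvq (k-1+1) (by omega) h1
        · have hseq : s = k - 1 := by omega
          rw [← hseq, hf2] at h1
          rw [← h1] at hy
          rcases hNu0 _ hy.symm with h'' | h''
          · exact huv 1 (by omega) s le_rfl h''.symm
          · exact hwq s le_rfl h''.symm
  · -- Branch B : the walk starts with w; build a C_k, contradiction
    exfalso
    have hv0Q : ∀ n, n ≤ k-1 → Q.getVert n ≠ v₀ := by
      intro n hnle hcon
      have hn0 : n ≠ 0 := by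
        intro h0; subst h0
        rw [Walk.getVert_zero] at hcon
        exact huvq 0 (by omega) (by rw [hcon, hv0])
      have hnL : n ≠ k-1 := by
        intro hL; subst hL
        rw [hendQ] at hcon
        have := hvinj 1 0 (by omega) (by omega) (hcon.trans hv0.symm)
        omega
      have hn2 : G.Adj v₀ (Q.getVert (n+1)) := by
        have := Q.adj_getVert_succ (i := n) (by omega)
        rwa [hcon] at this
      have hn1 : G.Adj v₀ (Q.getVert (n-1)) := by
        have := Q.adj_getVert_succ (i := n-1) (by omega)
        rw [show n - 1 + 1 = n from by omega, hcon] at this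
        exact this.symm
      have hnpos : n + 1 = k - 1 := by
        rcases hNv0 _ hn2 with h' | h'
        · have := getVert_inj' Q hQ (n+1) 1 (by omega) (by omega) (h'.trans hzB.symm)
          omega
        · exact getVert_inj' Q hQ (n+1) (k-1) (by omega) (by omega) (h'.trans hendQ.symm)
      rcases hNv0 _ hn1 with h' | h'
      · have := getVert_inj' Q hQ (n-1) 1 (by omega) (by omega) (h'.trans hzB.symm)
        omega
      · have := getVert_inj' Q hQ (n-1) (k-1) (by omega) (by omega) (h'.trans hendQ.symm)
        omega
    apply hsat.1
    apply hasCopy_of_cycle hk G (fun t => if t ≤ k-2 then Q.getVert (t+1) else v₀)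
    · intro i hi
      rcases Nat.lt_or_ge i (k-2) with h' | h'
      · rw [if_pos (by omega), if_pos (by omega)]
        exact Q.adj_getVert_succ (by omega)
      · have hieq : i = k-2 := by omega
        subst hieq
        rw [if_pos le_rfl, if_neg (by omega), show k - 2 + 1 = k - 1 from by omega, hendQ]
        exact hqv1.symm.symm.symm
    · rw [if_neg (by omega), if_pos (by omega), show (0:ℕ) + 1 = 1 from rfl, hzB]
      exact hw₂.symm
    · intro i j hi hj hij
      rcases le_or_gt i (k-2) with h1 | h1 <;> rcases le_or_gt j (k-2) with h2 | h2
      · rw [if_pos h1, if_pos h2] at hij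
        have := getVert_inj' Q hQ (i+1) (j+1) (by omega) (by omega) hij
        omega
      · rw [if_pos h1, if_neg (by omega)] at hij
        exact absurd hij (hv0Q (i+1) (by omega))
      · rw [if_neg (by omega), if_pos h2] at hij
        exact absurd hij.symm (hv0Q (j+1) (by omega))
      · omega
end Infra0
end

section
/- Let k ≥ 7 and let G be a C_k-saturated graph. Let u_0 u_1 … u_{k−4} and v_0 v_1 … v_{k−4} be two vertex-disjoint paths in G all of whose vertices have degree two in G. Then u_0 and v_0 have no common neighbor. -/
open SimpleGraph

section Helpers
variable {V : Type} {G : SimpleGraph V}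

lemma getVert_support_getElem {u v : V} (p : G.Walk u v) {i : ℕ} (hi : i ≤ p.length) :
    p.support[i]'(by rw [SimpleGraph.Walk.length_support]; omega) = p.getVert i := by
  induction p generalizing i with
  | nil =>
    have : i = 0 := by simpa using hi
    subst this; simp
  | cons h p ih =>
    cases i with
    | zero => simp
    | succ n =>
      simp only [Walk.support_cons, List.getElem_cons_succ, Walk.getVert_cons_succ]
      exact ih (by simpa [Walk.length_cons] using hi)

lemma SimpleGraph.Walk.IsPath.getVert_inj {u v : V} {p : G.Walk u v} (hp : p.IsPath) {i j : ℕ}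
    (hi : i ≤ p.length) (hj : j ≤ p.length) (h : p.getVert i = p.getVert j) : i = j := by
  rw [← getVert_support_getElem p hi, ← getVert_support_getElem p hj] at h
  have hn := (Walk.isPath_def _).mp hp
  have hl := p.length_support
  exact (List.Nodup.getElem_inj_iff hn (hi := by omega) (hj := by omega)).mp h

lemma getVert_mem_support'_s12 {u v : V} (p : G.Walk u v) {i : ℕ} (hi : i ≤ p.length) :
    p.getVert i ∈ p.support := by
  rw [Walk.mem_support_iff_exists_getVert]; exact ⟨i, rfl, hi⟩

variable [Fintype V]

lemma two_nbrs_s12 {x a b c : V} (h2 : (G.neighborSet x).ncard = 2) (ha : G.Adj x a)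
    (hb : G.Adj x b) (hab : a ≠ b) (hc : G.Adj x c) : c = a ∨ c = b := by
  have hsub : ({a, b} : Set V) ⊆ G.neighborSet x := by
    rintro z (rfl | rfl) <;> assumption
  have hcard : ({a, b} : Set V).ncard = 2 := Set.ncard_pair hab
  have := Set.eq_of_subset_of_ncard_le hsub (by omega) (Set.toFinite _)
  have hcmem : c ∈ G.neighborSet x := hc
  rw [← this] at hcmem
  simpa using hcmem

/-- If a path `W` enters a degree-two path `P` (at `P`-position `j₀`, moving forward),
then it must follow `P` all the way. -/
lemma chain_force {a b c d : V} {P : G.Walk a b} (hP : P.IsPath)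
    (hdeg : ∀ x ∈ P.support, (G.neighborSet x).ncard = 2)
    {W : G.Walk c d} (hW : W.IsPath) (hd : d ∉ P.support)
    (j₀ : ℕ)
    (h₀ : W.getVert 0 = P.getVert j₀) (h₁ : W.getVert 1 = P.getVert (j₀ + 1)) :
    ∀ i, j₀ + i ≤ P.length → i ≤ W.length ∧ W.getVert i = P.getVert (j₀ + i) := by
  intro i
  induction i using Nat.strong_induction_on with
  | _ i ih =>
    intro hiP
    match i, hiP with
    | 0, _ => exact ⟨Nat.zero_le _, by simpa using h₀⟩
    | 1, hiP =>
      refine ⟨?_, h₁⟩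
      by_contra hlen
      have hW0 : W.length = 0 := by omega
      have : W.getVert 1 = W.getVert 0 := by
        rw [Walk.getVert_of_length_le W (by omega), Walk.getVert_of_length_le W (by omega)]
      rw [h₀, h₁] at this
      have := hP.getVert_inj (by omega) (by omega) this
      omega
    | (n+2), hiP =>
      obtain ⟨hle1, he1⟩ := ih (n+1) (by omega) (by omega)
      obtain ⟨hle0, he0⟩ := ih n (by omega) (by omega)
      have hlt : n + 1 < W.length := by
        rcases Nat.lt_or_ge (n+1) W.length with h | h
        · exact h
        · exfalso
          have : W.getVert (n+1) = d := Walk.getVert_of_length_le W h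
          rw [he1] at this
          exact hd (this ▸ getVert_mem_support'_s12 P (by omega))
      refine ⟨by omega, ?_⟩
      have hadjW : G.Adj (W.getVert (n+1)) (W.getVert (n+2)) := W.adj_getVert_succ hlt
      rw [he1] at hadjW
      -- the vertex P.getVert (j₀+n+1) is internal in P
      have hprev : G.Adj (P.getVert (j₀+n+1)) (P.getVert (j₀+n)) :=
        (P.adj_getVert_succ (by omega)).symm
      have hnext : G.Adj (P.getVert (j₀+n+1)) (P.getVert (j₀+n+2)) := by
        have := P.adj_getVert_succ (i := j₀+n+1) (by omega)
        simpa [Nat.add_assoc] using this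
      have hpn : P.getVert (j₀+n) ≠ P.getVert (j₀+n+2) := fun h => by
        have := hP.getVert_inj (by omega) (by omega) h; omega
      have := two_nbrs_s12 (hdeg _ (getVert_mem_support'_s12 P (by omega))) hprev hnext hpn
        (by exact hadjW)
      rcases this with h | h
      · exfalso
        rw [← he0] at h
        have := hW.getVert_inj (by omega) (by omega) h
        omega
      · rw [h]; ring_nf
end Helpers

section Strings
variable {V : Type} [Fintype V] {G : SimpleGraph V}

lemma w_not_mem {u₀ u' v₀ w : V} {p : G.Walk u₀ u'} (hp : p.IsPath)
    (hplen : 2 ≤ p.length)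
    (hpdeg : ∀ x ∈ p.support, (G.neighborSet x).ncard = 2)
    (hwu : G.Adj w u₀) (hwv : G.Adj w v₀) (hv₀ : v₀ ∉ p.support) : w ∉ p.support := by
  intro hw
  obtain ⟨i, hi, hile⟩ := Walk.mem_support_iff_exists_getVert.mp hw
  have pe0 : p.getVert 0 = u₀ := p.getVert_zero
  rcases Nat.eq_zero_or_pos i with h0 | h0
  · subst h0
    rw [pe0] at hi
    exact G.irrefl (hi ▸ hwu)
  rcases Nat.lt_or_ge i p.length with hlt | hge
  · -- internal
    have ha : G.Adj (p.getVert i) (p.getVert (i-1)) := by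
      have := (p.adj_getVert_succ (i := i-1) (by omega)).symm
      rwa [Nat.sub_add_cancel (by omega)] at this
    have hb : G.Adj (p.getVert i) (p.getVert (i+1)) := p.adj_getVert_succ hlt
    have hab : p.getVert (i-1) ≠ p.getVert (i+1) := fun h => by
      have := hp.getVert_inj (by omega) (by omega) h; omega
    have hc : G.Adj (p.getVert i) v₀ := hi ▸ hwv
    rcases two_nbrs_s12 (hpdeg _ (getVert_mem_support'_s12 p (by omega))) ha hb hab hc with h | h
    · exact hv₀ (by rw [h]; exact getVert_mem_support'_s12 p (by omega))
    · exact hv₀ (by rw [h]; exact getVert_mem_support'_s12 p (by omega))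
  · -- i = p.length
    have hiL : i = p.length := by omega
    subst hiL
    have ha : G.Adj (p.getVert p.length) (p.getVert (p.length - 1)) := by
      have := (p.adj_getVert_succ (i := p.length - 1) (by omega)).symm
      rwa [Nat.sub_add_cancel (by omega)] at this
    have hb : G.Adj (p.getVert p.length) u₀ := by
      rw [hi]; exact hwu
    have hab : p.getVert (p.length - 1) ≠ u₀ := fun h => by
      have := hp.getVert_inj (by omega) (by omega) (h.trans pe0.symm); omega
    have hc : G.Adj (p.getVert p.length) v₀ := hi ▸ hwv
    rcases two_nbrs_s12 (hpdeg _ (getVert_mem_support'_s12 p le_rfl)) ha hb hab hc with h | h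
    · exact hv₀ (by rw [h]; exact getVert_mem_support'_s12 p (by omega))
    · exact hv₀ (by rw [h]; exact p.start_mem_support)

lemma nbr_end_not_mem {v₀ v' w t : V} {q : G.Walk v₀ v'} (hq : q.IsPath)
    (hlen : 2 ≤ q.length)
    (hqdeg : ∀ x ∈ q.support, (G.neighborSet x).ncard = 2)
    (hw : G.Adj w v₀) (hwq : w ∉ q.support)
    (ht : G.Adj t v') (htne : t ≠ q.getVert (q.length - 1)) : t ∉ q.support := by
  intro hmem
  obtain ⟨i, hi, hile⟩ := Walk.mem_support_iff_exists_getVert.mp hmem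
  have qeL : q.getVert q.length = v' := q.getVert_length
  rcases Nat.eq_zero_or_pos i with h0 | h0
  · subst h0
    rw [q.getVert_zero] at hi
    -- t = v₀, so v' is adjacent to v₀
    have hc : G.Adj v₀ v' := by rw [hi]; exact ht
    have ha : G.Adj v₀ (q.getVert 1) := by
      have := q.adj_getVert_succ (i := 0) (by omega)
      rwa [q.getVert_zero] at this
    have hab : q.getVert 1 ≠ w := fun h => hwq (h ▸ getVert_mem_support'_s12 q (by omega))
    rcases two_nbrs_s12 (hqdeg _ q.start_mem_support) ha hw.symm hab hc with h | h
    · have := hq.getVert_inj le_rfl (by omega) (qeL.trans h); omega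
    · exact hwq (h ▸ q.end_mem_support)
  rcases Nat.lt_or_ge i q.length with hlt | hge
  · rcases Nat.eq_or_lt_of_le (Nat.succ_le_of_lt hlt) with hi1 | hi1
    · exact htne (by rw [hi.symm]; congr 1; omega)
    · -- strictly internal, i + 1 < q.length
      have ha : G.Adj (q.getVert i) (q.getVert (i-1)) := by
        have := (q.adj_getVert_succ (i := i-1) (by omega)).symm
        rwa [Nat.sub_add_cancel (by omega)] at this
      have hb : G.Adj (q.getVert i) (q.getVert (i+1)) := q.adj_getVert_succ hlt
      have hab : q.getVert (i-1) ≠ q.getVert (i+1) := fun h => by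
        have := hq.getVert_inj (by omega) (by omega) h; omega
      have hc : G.Adj (q.getVert i) v' := hi ▸ ht
      rcases two_nbrs_s12 (hqdeg _ (getVert_mem_support'_s12 q (by omega))) ha hb hab hc with h | h
      · have := hq.getVert_inj le_rfl (by omega) (qeL.trans h); omega
      · have := hq.getVert_inj le_rfl (by omega) (qeL.trans h); omega
  · have hiL : i = q.length := by omega
    subst hiL
    rw [qeL] at hi
    exact G.irrefl (hi ▸ ht)
end Strings

section Copy
variable {V : Type} {G : SimpleGraph V}

/-- Build a walk from a function with consecutive adjacencies. -/
lemma exists_walk_of_fn : ∀ (n : ℕ) (c : ℕ → V), (∀ i < n, G.Adj (c i) (c (i+1))) →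
    ∃ W : G.Walk (c 0) (c n), W.length = n ∧ (∀ i ≤ n, W.getVert i = c i) ∧
      W.support = (List.range (n+1)).map c := by
  intro n
  induction n with
  | zero =>
    intro c _
    refine ⟨Walk.nil, rfl, ?_, by simp [List.range_succ]⟩
    intro i hi
    interval_cases i
    simp
  | succ n ih =>
    intro c h
    obtain ⟨W', hl, hv, hs⟩ := ih (fun j => c (j+1)) (fun i hi => h (i+1) (by omega))
    refine ⟨Walk.cons (h 0 (by omega)) W', by simp [hl], ?_, ?_⟩
    · intro i hi
      cases i with
      | zero => simp
      | succ j => simpa using hv j (by omega)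
    · rw [Walk.support_cons, hs]
      simp only [List.range_succ_eq_map, List.map_map]
      simp [Function.comp_def]

open Fin.CommRing in
/-- From a cyclic vertex arrangement, get a copy of `cycleGraph`. -/
lemma hasCopy_cycleGraph_of_fn {m : ℕ} (c : ℕ → V)
    (hinj : ∀ i < m+3, ∀ j < m+3, c i = c j → i = j)
    (hadj : ∀ i < m+2, G.Adj (c i) (c (i+1)))
    (hlast : G.Adj (c (m+2)) (c 0)) : HasCopy (cycleGraph (m+3)) G := by
  refine ⟨⟨fun a => c a.val, ?_⟩, ?_⟩
  · intro a b hab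
    have key : ∀ x y : Fin (m+3), y - x = 1 → G.Adj (c x.val) (c y.val) := by
      intro x y hxy
      have hy : y = x + 1 := by
        rw [sub_eq_iff_eq_add] at hxy; rw [hxy]; ring
      subst hy
      rcases eq_or_ne x (Fin.last (m+2)) with h | h
      · have : x.val = m + 2 := by rw [h]; rfl
        rw [this]
        have h0 : (x + 1).val = 0 := by
          rw [Fin.val_add_one, if_pos h]
        rw [h0]
        exact hlast
      · have hlt : x.val < m + 2 := by
          have := Fin.val_lt_last h
          simpa using this
        have h1 : (x + 1).val = x.val + 1 := by
          rw [Fin.val_add_one, if_neg h]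
        rw [h1]
        exact hadj x.val hlt
    have : (cycleGraph (m+1+2)).Adj a b := hab
    rw [cycleGraph_adj] at this
    rcases this with h | h
    · exact (key b a h).symm
    · exact key a b h
  · intro a b hab
    exact Fin.ext (hinj a.val a.isLt b.val b.isLt hab)

lemma Sym2.pair_eq_pair_iff {x y z w : V} :
    s(x, y) = s(z, w) ↔ (x = z ∧ y = w) ∨ (x = w ∧ y = z) := Sym2.eq_iff

open Fin.CommRing in
/-- From a copy of `C_k` in `G + xy` where `G` is `C_k`-free, extract a path. -/
lemma exists_path_of_addEdge {m : ℕ} {x y : V} (hxy : x ≠ y)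
    (hfree : ¬ HasCopy (cycleGraph (m+3)) G)
    (hcopy : HasCopy (cycleGraph (m+3)) (G ⊔ fromEdgeSet {s(x,y)})) :
    ∃ W : G.Walk x y, W.IsPath ∧ W.length = m + 2 := by
  obtain ⟨f, hf⟩ := hcopy
  have hadj' : ∀ a : Fin (m+3), (G ⊔ fromEdgeSet {s(x,y)}).Adj (f a) (f (a+1)) := by
    intro a
    apply f.map_adj
    show (cycleGraph (m+1+2)).Adj a (a+1)
    rw [cycleGraph_adj]
    right; simp
  -- find the special edge
  have hspec : ∃ i : Fin (m+3), (f i = x ∧ f (i+1) = y) ∨ (f i = y ∧ f (i+1) = x) := by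
    by_contra hno
    push_neg at hno
    apply hfree
    refine ⟨⟨f, ?_⟩, hf⟩
    intro a b hab
    have key : ∀ u w : Fin (m+3), w - u = 1 → G.Adj (f u) (f w) := by
      intro u w huw
      have hw : w = u + 1 := by rw [sub_eq_iff_eq_add] at huw; rw [huw]; ring
      subst hw
      have := hadj' u
      rw [sup_adj, fromEdgeSet_adj] at this
      rcases this with h | ⟨h1, _⟩
      · exact h
      · exfalso
        rw [Set.mem_singleton_iff, Sym2.pair_eq_pair_iff] at h1
        rcases h1 with ⟨ha, hb⟩ | ⟨ha, hb⟩
        · exact (hno u).1 ha hb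
        · exact (hno u).2 ha hb
    have : (cycleGraph (m+1+2)).Adj a b := hab
    rw [cycleGraph_adj] at this
    rcases this with h | h
    · exact (key b a h).symm
    · exact key a b h
  obtain ⟨i, hpat⟩ := hspec
  set c : ℕ → V := fun j => f (i + 1 + (j : Fin (m+3))) with hc
  have hcast : ∀ j : ℕ, ((j+1 : ℕ) : Fin (m+3)) = (j : Fin (m+3)) + 1 := by
    intro j; push_cast; ring
  have hadjc : ∀ j : ℕ, (G ⊔ fromEdgeSet {s(x,y)}).Adj (c j) (c (j+1)) := by
    intro j
    have : c (j+1) = f (i + 1 + (j : Fin (m+3)) + 1) := by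
      rw [hc]; simp only [hcast]; ring_nf
    rw [this]
    exact hadj' _
  have hinj' : ∀ j1 < m+3, ∀ j2 < m+3, c j1 = c j2 → j1 = j2 := by
    intro j1 h1 j2 h2 h
    have := hf h
    have h' : (j1 : Fin (m+3)) = (j2 : Fin (m+3)) := by
      have := add_left_cancel this
      exact this
    have := congrArg Fin.val h'
    rwa [Fin.val_cast_of_lt h1, Fin.val_cast_of_lt h2] at this
  -- equalities with f i and f (i+1) force index positions
  have hfi : ∀ j, c j = f i → (m+3) ∣ (j+1) := by
    intro j h
    have := hf h
    have h0 : ((j+1 : ℕ) : Fin (m+3)) = 0 := by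
      rw [hcast]
      have h2 : i + (1 + (j : Fin (m+3))) = i + 0 := by rw [add_zero, ← add_assoc]; exact this
      have h4 := add_left_cancel h2
      linear_combination h4
    exact Fin.natCast_eq_zero.mp h0
  have hfi1 : ∀ j, c j = f (i+1) → (m+3) ∣ j := by
    intro j h
    have := hf h
    have h0 : ((j : ℕ) : Fin (m+3)) = 0 := by
      have : i + 1 + (j : Fin (m+3)) = i + 1 + 0 := by rw [add_zero]; exact this
      exact add_left_cancel this
    exact Fin.natCast_eq_zero.mp h0
  have hG : ∀ j < m+2, G.Adj (c j) (c (j+1)) := by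
    intro j hj
    have := hadjc j
    rw [sup_adj, fromEdgeSet_adj] at this
    rcases this with h | ⟨h1, _⟩
    · exact h
    · exfalso
      rw [Set.mem_singleton_iff, Sym2.pair_eq_pair_iff] at h1
      rcases hpat with ⟨hx, hy⟩ | ⟨hy, hx⟩
      · rcases h1 with ⟨ha, hb⟩ | ⟨ha, hb⟩
        · have := hfi j (by rw [ha, hx])
          have := Nat.eq_zero_of_dvd_of_lt this (by omega)
          omega
        · have d1 := hfi1 j (by rw [ha, hy])
          have h2 := hfi (j+1) (by rw [hb, hx])
          have e1 := Nat.eq_zero_of_dvd_of_lt d1 (by omega)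
          have e2 := Nat.eq_zero_of_dvd_of_lt h2 (by omega)
          omega
      · rcases h1 with ⟨ha, hb⟩ | ⟨ha, hb⟩
        · have d1 := hfi1 j (by rw [ha, hx])
          have h2 := hfi (j+1) (by rw [hb, hy])
          have e1 := Nat.eq_zero_of_dvd_of_lt d1 (by omega)
          have e2 := Nat.eq_zero_of_dvd_of_lt h2 (by omega)
          omega
        · have := hfi j (by rw [ha, hy])
          have := Nat.eq_zero_of_dvd_of_lt this (by omega)
          omega
  have hc0 : c 0 = f (i+1) := by rw [hc]; simp
  have hck : c (m+2) = f i := by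
    have h3 : ((m+2:ℕ) : Fin (m+3)) + 1 = 0 := by
      rw [← hcast]
      exact_mod_cast Fin.natCast_self (m+3)
    show f (i + 1 + ((m+2:ℕ) : Fin (m+3))) = f i
    congr 1
    rw [add_assoc, add_comm 1, h3, add_zero]
  obtain ⟨W₀, hlen, hget, hsup⟩ := exists_walk_of_fn (m+2) c hG
  have hpath : W₀.IsPath := by
    rw [Walk.isPath_def, hsup]
    refine List.Nodup.map_on ?_ List.nodup_range
    intro a ha b hb h
    rw [List.mem_range] at ha hb
    exact hinj' a (by omega) b (by omega) h
  rcases hpat with ⟨hx, hy⟩ | ⟨hy, hx⟩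
  · refine ⟨(W₀.reverse).copy (by rw [hck, hx]) (by rw [hc0, hy]), ?_, ?_⟩
    · rw [Walk.isPath_copy]; exact hpath.reverse
    · rw [Walk.length_copy, Walk.length_reverse, hlen]
  · refine ⟨W₀.copy (by rw [hc0, hx]) (by rw [hck, hy]), ?_, ?_⟩
    · rw [Walk.isPath_copy]; exact hpath
    · rw [Walk.length_copy, hlen]

end Copy

section Aux
variable {V : Type} [Fintype V] {G : SimpleGraph V}

lemma aux {M : ℕ}
    (hfree : ¬ HasCopy (cycleGraph (M+7)) G)
    (hsat2 : ∀ x y : V, x ≠ y → ¬ G.Adj x y →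
      HasCopy (cycleGraph (M+7)) (G ⊔ fromEdgeSet {s(x,y)}))
    {u₀ u' v₀ v' w : V} (p : G.Walk u₀ u') (q : G.Walk v₀ v')
    (hp : p.IsPath) (hq : q.IsPath) (hplen : p.length = M+3) (hqlen : q.length = M+3)
    (hdisj : ∀ x ∈ p.support, x ∉ q.support)
    (hpdeg : ∀ x ∈ p.support, (G.neighborSet x).ncard = 2)
    (hqdeg : ∀ x ∈ q.support, (G.neighborSet x).ncard = 2)
    (hwu : G.Adj w u₀) (hwv : G.Adj w v₀)
    (hwu' : ¬ G.Adj w u') : False := by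
  have e47 : M + 4 + 3 = M + 7 := by omega
  have hpmem : ∀ i, i ≤ M+3 → p.getVert i ∈ p.support :=
    fun i hi => getVert_mem_support'_s12 p (by rw [hplen]; exact hi)
  have hqmem : ∀ i, i ≤ M+3 → q.getVert i ∈ q.support :=
    fun i hi => getVert_mem_support'_s12 q (by rw [hqlen]; exact hi)
  have hpinj : ∀ i j, i ≤ M+3 → j ≤ M+3 → p.getVert i = p.getVert j → i = j :=
    fun i j hi hj h => hp.getVert_inj (by rw [hplen]; exact hi) (by rw [hplen]; exact hj) h
  have hqinj : ∀ i j, i ≤ M+3 → j ≤ M+3 → q.getVert i = q.getVert j → i = j :=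
    fun i j hi hj h => hq.getVert_inj (by rw [hqlen]; exact hi) (by rw [hqlen]; exact hj) h
  have padj : ∀ i, i < M+3 → G.Adj (p.getVert i) (p.getVert (i+1)) :=
    fun i hi => p.adj_getVert_succ (by rw [hplen]; exact hi)
  have qadj : ∀ i, i < M+3 → G.Adj (q.getVert i) (q.getVert (i+1)) :=
    fun i hi => q.adj_getVert_succ (by rw [hqlen]; exact hi)
  have pe0 : p.getVert 0 = u₀ := p.getVert_zero
  have peL : p.getVert (M+3) = u' := by rw [← hplen]; exact p.getVert_length
  have qe0 : q.getVert 0 = v₀ := q.getVert_zero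
  have qeL : q.getVert (M+3) = v' := by rw [← hqlen]; exact q.getVert_length
  have hv0p : v₀ ∉ p.support := fun h => hdisj v₀ h q.start_mem_support
  have hv'p : v' ∉ p.support := fun h => hdisj v' h q.end_mem_support
  have hu0q : u₀ ∉ q.support := fun h => hdisj u₀ p.start_mem_support h
  have hu'q : u' ∉ q.support := fun h => hdisj u' p.end_mem_support h
  have hwp : w ∉ p.support := w_not_mem hp (by rw [hplen]; omega) hpdeg hwu hwv hv0p
  have hwq : w ∉ q.support := w_not_mem hq (by rw [hqlen]; omega) hqdeg hwv hwu hu0q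
  have hNu0 : ∀ c, G.Adj u₀ c → c = p.getVert 1 ∨ c = w := by
    intro c hc
    have ha : G.Adj u₀ (p.getVert 1) := by have := padj 0 (by omega); rwa [pe0] at this
    have hab : p.getVert 1 ≠ w := fun h => hwp (h ▸ hpmem 1 (by omega))
    exact two_nbrs_s12 (hpdeg _ p.start_mem_support) ha hwu.symm hab hc
  have hNv0 : ∀ c, G.Adj v₀ c → c = q.getVert 1 ∨ c = w := by
    intro c hc
    have ha : G.Adj v₀ (q.getVert 1) := by have := qadj 0 (by omega); rwa [qe0] at this
    have hab : q.getVert 1 ≠ w := fun h => hwq (h ▸ hqmem 1 (by omega))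
    exact two_nbrs_s12 (hqdeg _ q.start_mem_support) ha hwv.symm hab hc
  have hNp : ∀ i, 1 ≤ i → i < M+3 → ∀ c, G.Adj (p.getVert i) c →
      c = p.getVert (i-1) ∨ c = p.getVert (i+1) := by
    intro i h1 h2 c hc
    have ha : G.Adj (p.getVert i) (p.getVert (i-1)) := by
      have := (padj (i-1) (by omega)).symm
      rwa [Nat.sub_add_cancel (by omega)] at this
    have hb := padj i h2
    have hab : p.getVert (i-1) ≠ p.getVert (i+1) := fun h => by
      have := hpinj _ _ (by omega) (by omega) h; omega
    exact two_nbrs_s12 (hpdeg _ (hpmem i (by omega))) ha hb hab hc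
  have hNq : ∀ i, 1 ≤ i → i < M+3 → ∀ c, G.Adj (q.getVert i) c →
      c = q.getVert (i-1) ∨ c = q.getVert (i+1) := by
    intro i h1 h2 c hc
    have ha : G.Adj (q.getVert i) (q.getVert (i-1)) := by
      have := (qadj (i-1) (by omega)).symm
      rwa [Nat.sub_add_cancel (by omega)] at this
    have hb := qadj i h2
    have hab : q.getVert (i-1) ≠ q.getVert (i+1) := fun h => by
      have := hqinj _ _ (by omega) (by omega) h; omega
    exact two_nbrs_s12 (hqdeg _ (hqmem i (by omega))) ha hb hab hc
  have hfree' : ¬ HasCopy (cycleGraph (M+4+3)) G := by rw [e47]; exact hfree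
  -- the non-edge u₀ v₁
  have hne1 : u₀ ≠ q.getVert 1 := fun h => hu0q (by rw [h]; exact hqmem 1 (by omega))
  have hnadj1 : ¬ G.Adj u₀ (q.getVert 1) := by
    intro h
    rcases hNu0 _ h with h1 | h1
    · exact hdisj _ (hpmem 1 (by omega)) (h1 ▸ hqmem 1 (by omega))
    · exact hwq (h1 ▸ hqmem 1 (by omega))
  have hcopy1 : HasCopy (cycleGraph (M+4+3)) (G ⊔ fromEdgeSet {s(u₀, q.getVert 1)}) := by
    rw [e47]; exact hsat2 u₀ (q.getVert 1) hne1 hnadj1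
  obtain ⟨R, hR, hRlen0⟩ := exists_path_of_addEdge hne1 hfree' hcopy1
  have hRlen : R.length = M+6 := by omega
  have hRinj : ∀ i j, i ≤ M+6 → j ≤ M+6 → R.getVert i = R.getVert j → i = j :=
    fun i j hi hj h => hR.getVert_inj (by omega) (by omega) h
  have Radj : ∀ i, i < M+6 → G.Adj (R.getVert i) (R.getVert (i+1)) :=
    fun i hi => R.adj_getVert_succ (by omega)
  have Re0 : R.getVert 0 = u₀ := R.getVert_zero
  have ReL : R.getVert (M+6) = q.getVert 1 := by
    rw [show M+6 = R.length by omega]; exact R.getVert_length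
  have ha1 : R.getVert 1 = p.getVert 1 ∨ R.getVert 1 = w := by
    apply hNu0
    have := Radj 0 (by omega); rwa [Re0] at this
  have hpen : R.getVert (M+5) = v₀ ∨ R.getVert (M+5) = q.getVert 2 := by
    have hadj : G.Adj (q.getVert 1) (R.getVert (M+5)) := by
      have := (Radj (M+5) (by omega)).symm
      rwa [ReL] at this
    rcases hNq 1 (by omega) (by omega) _ hadj with h | h
    · left; rw [h]; rw [show (1:ℕ)-1 = 0 from rfl, qe0]
    · right; rw [h]
  -- reverse walk facts
  have hRrev : R.reverse.IsPath := hR.reverse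
  have hrevlen : R.reverse.length = M+6 := by rw [Walk.length_reverse]; omega
  have hrev : ∀ i, R.reverse.getVert i = R.getVert (M+6-i) := fun i => by
    rw [Walk.getVert_reverse, show R.length - i = M+6-i by omega]
  -- q-chain through the end of R (case: penultimate vertex is v₂)
  have hqchain : R.getVert (M+5) = q.getVert 2 →
      (R.getVert 4 = v' ∧ R.getVert 5 = q.getVert (M+2) ∧ G.Adj (R.getVert 3) v') := by
    intro hE
    have h₀ : R.reverse.getVert 0 = q.getVert 1 := Walk.getVert_zero _
    have h₁ : R.reverse.getVert 1 = q.getVert (1+1) := by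
      rw [hrev 1, show M+6-1 = M+5 by omega, hE]
    have hchq := chain_force hq hqdeg hRrev hu0q 1 h₀ h₁
    have hq4 : R.getVert 4 = v' := by
      have := (hchq (M+2) (by rw [hqlen]; omega)).2
      rw [hrev (M+2), show M+6-(M+2) = 4 by omega,
        show 1+(M+2) = M+3 by omega, qeL] at this
      exact this
    have hq5 : R.getVert 5 = q.getVert (M+2) := by
      have := (hchq (M+1) (by rw [hqlen]; omega)).2
      rw [hrev (M+1), show M+6-(M+1) = 5 by omega, show 1+(M+1) = M+2 by omega] at this
      exact this
    refine ⟨hq4, hq5, ?_⟩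
    have := Radj 3 (by omega)
    rwa [hq4] at this
  by_cases hCC : G.Adj u' v'
  · -- u' and v' adjacent
    have hNu' : ∀ c, G.Adj u' c → c = p.getVert (M+2) ∨ c = v' := by
      intro c hc
      have ha : G.Adj u' (p.getVert (M+2)) := by
        have := (padj (M+2) (by omega)).symm
        rwa [show M+2+1 = M+3 by omega, peL] at this
      have hab : p.getVert (M+2) ≠ v' := fun h =>
        hv'p (by rw [← h]; exact hpmem _ (by omega))
      exact two_nbrs_s12 (hpdeg _ p.end_mem_support) ha hCC hab hc
    have hNv' : ∀ c, G.Adj v' c → c = q.getVert (M+2) ∨ c = u' := by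
      intro c hc
      have ha : G.Adj v' (q.getVert (M+2)) := by
        have := (qadj (M+2) (by omega)).symm
        rwa [show M+2+1 = M+3 by omega, qeL] at this
      have hab : q.getVert (M+2) ≠ u' := fun h =>
        hu'q (by rw [← h]; exact hqmem _ (by omega))
      exact two_nbrs_s12 (hqdeg _ q.end_mem_support) ha hCC.symm hab hc
    rcases Nat.eq_zero_or_pos M with hM | hM
    · -- M = 0 : use the non-edge u₀ v₂ instead
      subst hM
      have hNu'n : ∀ c, G.Adj u' c → c = p.getVert 2 ∨ c = v' := hNu'
      have hNv'n : ∀ c, G.Adj v' c → c = q.getVert 2 ∨ c = u' := hNv'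
      have peLn : p.getVert 3 = u' := peL
      have qeLn : q.getVert 3 = v' := qeL
      have hne2 : u₀ ≠ q.getVert 2 := fun h => hu0q (by rw [h]; exact hqmem 2 (by omega))
      have hnadj2 : ¬ G.Adj u₀ (q.getVert 2) := by
        intro h
        rcases hNu0 _ h with h1 | h1
        · exact hdisj _ (hpmem 1 (by omega)) (h1 ▸ hqmem 2 (by omega))
        · exact hwq (h1 ▸ hqmem 2 (by omega))
      have hcopy2 : HasCopy (cycleGraph (0+4+3)) (G ⊔ fromEdgeSet {s(u₀, q.getVert 2)}) := by
        rw [e47]; exact hsat2 _ _ hne2 hnadj2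
      obtain ⟨S, hS, hSlen0⟩ := exists_path_of_addEdge hne2 hfree' hcopy2
      have hSlen : S.length = 6 := by omega
      have hSinj : ∀ i j, i ≤ 6 → j ≤ 6 → S.getVert i = S.getVert j → i = j :=
        fun i j hi hj h => hS.getVert_inj (by omega) (by omega) h
      have Sadj : ∀ i, i < 6 → G.Adj (S.getVert i) (S.getVert (i+1)) :=
        fun i hi => S.adj_getVert_succ (by omega)
      have Se0 : S.getVert 0 = u₀ := S.getVert_zero
      have SeL : S.getVert 6 = q.getVert 2 := by
        rw [show (6:ℕ) = S.length by omega]; exact S.getVert_length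
      have ha1' : S.getVert 1 = p.getVert 1 ∨ S.getVert 1 = w := by
        apply hNu0
        have := Sadj 0 (by omega); rwa [Se0] at this
      rcases ha1' with ha | ha
      · -- S starts along p
        have hv2p : q.getVert 2 ∉ p.support := fun h => hdisj _ h (hqmem 2 (by omega))
        have hch := chain_force hp hpdeg hS hv2p 0 (by rw [Se0, pe0]) (by rw [ha])
        have hchp : ∀ i, i ≤ 3 → S.getVert i = p.getVert i := by
          intro i hi
          have := (hch i (by rw [hplen]; omega)).2
          rwa [zero_add] at this
        have hd : G.Adj u' (S.getVert 4) := by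
          have h3 := Sadj 3 (by omega)
          rw [hchp 3 (by omega), peLn] at h3
          exact h3
        rcases hNu'n _ hd with h | h
        · have : 4 = 2 := hSinj _ _ (by omega) (by omega) (h.trans (hchp 2 (by omega)).symm)
          omega
        · -- S.getVert 4 = v'
          have hd2 : G.Adj v' (S.getVert 5) := by
            have := Sadj 4 (by omega); rwa [h] at this
          rcases hNv'n _ hd2 with h2 | h2
          · have : 5 = 6 := hSinj _ _ (by omega) (by omega) (h2.trans SeL.symm)
            omega
          · have : 5 = 3 := hSinj _ _ (by omega) (by omega)
              (h2.trans (peLn.symm.trans (hchp 3 (by omega)).symm))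
            omega
      · -- S starts via w
        have hpen' : S.getVert 5 = q.getVert 1 ∨ S.getVert 5 = q.getVert 3 := by
          have hadj : G.Adj (q.getVert 2) (S.getVert 5) := by
            have := (Sadj 5 (by omega)).symm
            rwa [SeL] at this
          rcases hNq 2 (by omega) (by omega) _ hadj with h | h
          · left; exact h
          · right; exact h
        rcases hpen' with hpen | hpen
        · -- ends via v₁
          have hd : G.Adj (q.getVert 1) (S.getVert 4) := by
            have := (Sadj 4 (by omega)).symm
            rwa [hpen] at this
          rcases hNq 1 (by omega) (by omega) _ hd with h | h
          · -- S.getVert 4 = q.getVert 0 = v₀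
            have h4 : S.getVert 4 = v₀ := h.trans qe0
            have hd2 : G.Adj v₀ (S.getVert 3) := by
              have := (Sadj 3 (by omega)).symm
              rwa [h4] at this
            rcases hNv0 _ hd2 with h2 | h2
            · have : 3 = 5 := hSinj _ _ (by omega) (by omega) (h2.trans hpen.symm)
              omega
            · have : 3 = 1 := hSinj _ _ (by omega) (by omega) (h2.trans ha.symm)
              omega
          · have : 4 = 6 := hSinj _ _ (by omega) (by omega) (h.trans SeL.symm)
            omega
        · -- ends via v₃ = v'
          have hd : G.Adj v' (S.getVert 4) := by
            have := (Sadj 4 (by omega)).symm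
            rw [hpen, qeLn] at this
            exact this
          rcases hNv'n _ hd with h | h
          · have : 4 = 6 := hSinj _ _ (by omega) (by omega) (h.trans SeL.symm)
            omega
          · -- S.getVert 4 = u'
            have hd2 : G.Adj u' (S.getVert 3) := by
              have := (Sadj 3 (by omega)).symm
              rwa [h] at this
            rcases hNu'n _ hd2 with h2 | h2
            · -- S.getVert 3 = p.getVert 2
              have hd3 : G.Adj (p.getVert 2) (S.getVert 2) := by
                have := (Sadj 2 (by omega)).symm
                rwa [h2] at this
              rcases hNp 2 (by omega) (by omega) _ hd3 with h3 | h3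
              · -- S.getVert 2 = p.getVert 1
                have hd4 : G.Adj w (p.getVert 1) := by
                  have := Sadj 1 (by omega)
                  rwa [ha, h3.trans (show p.getVert (2-1) = p.getVert 1 from rfl)] at this
                rcases hNp 1 (by omega) (by omega) _ hd4.symm with h4 | h4
                · exact hwp (by rw [h4]; exact hpmem _ (by omega))
                · exact hwp (by rw [h4]; exact hpmem _ (by omega))
              · have : 2 = 4 := hSinj _ _ (by omega) (by omega)
                  (h3.trans (peLn.trans h.symm))
                omega
            · have : 3 = 5 := hSinj _ _ (by omega) (by omega)
                (h2.trans (qeLn.symm.trans hpen.symm))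
              omega
    · -- M ≥ 1 : use the path R (non-edge u₀ v₁)
      rcases ha1 with ha1 | ha1 <;> rcases hpen with hpen | hpen
      · -- starts along p, ends via v₀
        have hv1p : q.getVert 1 ∉ p.support := fun h => hdisj _ h (hqmem 1 (by omega))
        have hch := chain_force hp hpdeg hR hv1p 0 (by rw [Re0, pe0]) (by rw [ha1])
        have hchp : ∀ i, i ≤ M+3 → R.getVert i = p.getVert i := by
          intro i hi
          have := (hch i (by rw [hplen]; omega)).2
          rwa [zero_add] at this
        have hd : G.Adj u' (R.getVert (M+4)) := by
          have := Radj (M+3) (by omega)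
          rwa [hchp (M+3) (by omega), peL] at this
        rcases hNu' _ hd with h | h
        · have : M+4 = M+2 := hRinj _ _ (by omega) (by omega)
            (h.trans (hchp (M+2) (by omega)).symm)
          omega
        · -- R.getVert (M+4) = v'
          have hd2 : G.Adj v₀ (R.getVert (M+4)) := by
            have := (Radj (M+4) (by omega)).symm
            rwa [hpen] at this
          rcases hNv0 _ hd2 with h2 | h2
          · have : M+4 = M+6 := hRinj _ _ (by omega) (by omega) (h2.trans ReL.symm)
            omega
          · have hvw : v' = w := h.symm.trans h2
            exact hwq (hvw ▸ q.end_mem_support)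
      · -- starts along p, ends via v₂
        have hv1p : q.getVert 1 ∉ p.support := fun h => hdisj _ h (hqmem 1 (by omega))
        have hch := chain_force hp hpdeg hR hv1p 0 (by rw [Re0, pe0]) (by rw [ha1])
        have hchp : ∀ i, i ≤ M+3 → R.getVert i = p.getVert i := by
          intro i hi
          have := (hch i (by rw [hplen]; omega)).2
          rwa [zero_add] at this
        obtain ⟨hq4, hq5, ht⟩ := hqchain hpen
        rcases hNv' _ ht.symm with h | h
        · have : 3 = 5 := hRinj _ _ (by omega) (by omega) (h.trans hq5.symm)
          omega
        · have : 3 = M+3 := hpinj _ _ (by omega) (by omega)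
            ((hchp 3 (by omega)).symm.trans (h.trans peL.symm))
          omega
      · -- starts via w, ends via v₀
        have hd : G.Adj v₀ (R.getVert (M+4)) := by
          have := (Radj (M+4) (by omega)).symm
          rwa [hpen] at this
        rcases hNv0 _ hd with h | h
        · have : M+4 = M+6 := hRinj _ _ (by omega) (by omega) (h.trans ReL.symm)
          omega
        · have : M+4 = 1 := hRinj _ _ (by omega) (by omega) (h.trans ha1.symm)
          omega
      · -- starts via w, ends via v₂
        obtain ⟨hq4, hq5, ht⟩ := hqchain hpen
        rcases hNv' _ ht.symm with h | h
        · have : 3 = 5 := hRinj _ _ (by omega) (by omega) (h.trans hq5.symm)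
          omega
        · -- R.getVert 3 = u'
          have hd2 : G.Adj u' (R.getVert 2) := by
            have := (Radj 2 (by omega)).symm
            rwa [h] at this
          rcases hNu' _ hd2 with h2 | h2
          · have hd4 : G.Adj w (p.getVert (M+2)) := by
              have := Radj 1 (by omega)
              rwa [ha1, h2] at this
            rcases hNp (M+2) (by omega) (by omega) _ hd4.symm with h4 | h4
            · exact hwp (by rw [h4]; exact hpmem _ (by omega))
            · exact hwp (by rw [h4]; exact hpmem _ (by omega))
          · have : 2 = 4 := hRinj _ _ (by omega) (by omega) (h2.trans hq4.symm)
            omega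
  · -- main case: u' and v' non-adjacent
    rcases ha1 with ha1 | ha1 <;> rcases hpen with hpen | hpen
    · -- R starts along p, ends via v₀ : forces w adjacent to u'
      have hv1p : q.getVert 1 ∉ p.support := fun h => hdisj _ h (hqmem 1 (by omega))
      have hch := chain_force hp hpdeg hR hv1p 0 (by rw [Re0, pe0]) (by rw [ha1])
      have hchp : ∀ i, i ≤ M+3 → R.getVert i = p.getVert i := by
        intro i hi
        have := (hch i (by rw [hplen]; omega)).2
        rwa [zero_add] at this
      -- R.getVert (M+4) is adjacent to v₀ hence = v₁ or w
      have hd : G.Adj v₀ (R.getVert (M+4)) := by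
        have := (Radj (M+4) (by omega)).symm
        rwa [hpen] at this
      rcases hNv0 _ hd with h | h
      · have : M+4 = M+6 := hRinj _ _ (by omega) (by omega) (by rw [h, ReL])
        omega
      · -- R.getVert (M+4) = w, but it is adjacent to u'
        have hu'adj : G.Adj u' (R.getVert (M+4)) := by
          have := Radj (M+3) (by omega)
          rwa [hchp (M+3) (by omega), peL] at this
        rw [h] at hu'adj
        exact hwu' hu'adj.symm
    · -- R starts along p, ends via v₂
      have hv1p : q.getVert 1 ∉ p.support := fun h => hdisj _ h (hqmem 1 (by omega))
      have hch := chain_force hp hpdeg hR hv1p 0 (by rw [Re0, pe0]) (by rw [ha1])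
      have hchp : ∀ i, i ≤ M+3 → R.getVert i = p.getVert i := by
        intro i hi
        have := (hch i (by rw [hplen]; omega)).2
        rwa [zero_add] at this
      obtain ⟨hq4, hq5, ht⟩ := hqchain hpen
      rw [hchp 3 (by omega)] at ht
      rcases Nat.eq_zero_or_pos M with hM | hM
      · -- M = 0 : p.getVert 3 = u', contradicting ¬ Adj u' v'
        apply hCC
        rw [← peL, hM]
        exact ht
      · -- M ≥ 1 : p.getVert 3 is internal, so v' would be on p
        rcases hNp 3 (by omega) (by omega) _ ht with h | h
        · exact hv'p (by rw [h]; exact hpmem _ (by omega))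
        · exact hv'p (by rw [h]; exact hpmem _ (by omega))
    · -- R starts via w, ends via v₀ : impossible by injectivity
      have hd : G.Adj v₀ (R.getVert (M+4)) := by
        have := (Radj (M+4) (by omega)).symm
        rwa [hpen] at this
      rcases hNv0 _ hd with h | h
      · have : M+4 = M+6 := hRinj _ _ (by omega) (by omega) (by rw [h, ReL])
        omega
      · have : M+4 = 1 := hRinj _ _ (by omega) (by omega) (by rw [h, ha1])
        omega
    · -- R starts via w, ends via v₂ : produces a C_k in G
      obtain ⟨hq4, hq5, ht⟩ := hqchain hpen
      have f1 : G.Adj w (R.getVert 2) := by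
        have := Radj 1 (by omega); rwa [ha1] at this
      have f2 : G.Adj (R.getVert 2) (R.getVert 3) := Radj 2 (by omega)
      have htw : R.getVert 3 ≠ w := fun h => by
        have := hRinj 3 1 (by omega) (by omega) (h.trans ha1.symm); omega
      have htne : R.getVert 3 ≠ q.getVert (M+2) := fun h => by
        have := hRinj 3 5 (by omega) (by omega) (h.trans hq5.symm); omega
      have htq : R.getVert 3 ∉ q.support := by
        refine nbr_end_not_mem hq (by rw [hqlen]; omega) hqdeg hwv hwq ht ?_
        rw [show q.length - 1 = M+2 by omega]
        exact htne
      have hzq : R.getVert 2 ∉ q.support := by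
        intro hmem
        obtain ⟨i, hi, hile⟩ := Walk.mem_support_iff_exists_getVert.mp hmem
        rw [hqlen] at hile
        rcases Nat.eq_zero_or_pos i with h0 | h0
        · subst h0
          rw [qe0] at hi
          have hadj : G.Adj v₀ (R.getVert 3) := by rw [← hi] at f2; exact f2
          rcases hNv0 _ hadj with h | h
          · exact htq (by rw [h]; exact hqmem 1 (by omega))
          · exact htw h
        rcases Nat.lt_or_ge i (M+3) with hlt | hge
        · have hadj : G.Adj (q.getVert i) w := by rw [hi]; exact f1.symm
          rcases hNq i (by omega) (by omega) _ hadj with h | h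
          · exact hwq (h ▸ hqmem _ (by omega))
          · exact hwq (h ▸ hqmem _ (by omega))
        · have hiL : i = M+3 := by omega
          subst hiL
          rw [qeL] at hi
          have : 2 = 4 := hRinj _ _ (by omega) (by omega) (by rw [hq4, ← hi])
          omega
      -- build the cycle w, R2, R3, v', v_{M+2}, ..., v₀
      set c : ℕ → V := fun j => if j = 0 then w else if j = 1 then R.getVert 2
        else if j = 2 then R.getVert 3 else q.getVert (M+6-j) with hcdef
      have hc0 : c 0 = w := rfl
      have hc1 : c 1 = R.getVert 2 := rfl
      have hc2 : c 2 = R.getVert 3 := rfl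
      have hcj : ∀ j, 3 ≤ j → c j = q.getVert (M+6-j) := fun j hj => by
        simp only [hcdef]
        rw [if_neg (by omega), if_neg (by omega), if_neg (by omega)]
      have hcsmall : ∀ j, j < 3 → c j = R.getVert (j+1) := by
        intro j hj
        interval_cases j
        · rw [hc0, ← ha1]
        · rw [hc1]
        · rw [hc2]
      have hcadj : ∀ i, i < M+6 → G.Adj (c i) (c (i+1)) := by
        intro i hi
        match i with
        | 0 => rw [hc0, hc1]; exact f1
        | 1 => rw [hc1, hc2]; exact f2
        | 2 =>
          rw [hc2, hcj 3 (by omega), show M+6-3 = M+3 by omega, qeL]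
          exact ht
        | (n+3) =>
          rw [hcj (n+3) (by omega), hcj (n+4) (by omega)]
          have := (qadj (M+2-n) (by omega)).symm
          rwa [show M+2-n+1 = M+6-(n+3) by omega, show M+2-n = M+6-(n+4) by omega] at this
      have hlast : G.Adj (c (M+6)) (c 0) := by
        rw [hc0, hcj (M+6) (by omega), show M+6-(M+6) = 0 by omega, qe0]
        exact hwv.symm
      have hnotq : ∀ j, j < 3 → c j ∉ q.support := by
        intro j hj
        interval_cases j
        · rw [hc0]; exact hwq
        · rw [hc1]; exact hzq
        · rw [hc2]; exact htq
      have hcinj : ∀ i, i < M+7 → ∀ j, j < M+7 → c i = c j → i = j := by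
        intro i hi j hj h
        rcases Nat.lt_or_ge i 3 with hi3 | hi3 <;> rcases Nat.lt_or_ge j 3 with hj3 | hj3
        · rw [hcsmall i hi3, hcsmall j hj3] at h
          have := hRinj _ _ (by omega) (by omega) h; omega
        · exfalso
          apply hnotq i hi3
          rw [h, hcj j (by omega)]
          exact hqmem _ (by omega)
        · exfalso
          apply hnotq j hj3
          rw [← h, hcj i (by omega)]
          exact hqmem _ (by omega)
        · rw [hcj i (by omega), hcj j (by omega)] at h
          have := hqinj _ _ (by omega) (by omega) h
          omega
      apply hfree
      rw [← e47]
      exact hasCopy_cycleGraph_of_fn (m := M+4) c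
        (fun i hi j hj h => hcinj i (by omega) j (by omega) h)
        (fun i hi => hcadj i (by omega))
        (by rw [show M+4+2 = M+6 by omega]; exact hlast)

lemma aux2 {M : ℕ}
    (hfree : ¬ HasCopy (cycleGraph (M+7)) G)
    (hsat2 : ∀ x y : V, x ≠ y → ¬ G.Adj x y →
      HasCopy (cycleGraph (M+7)) (G ⊔ fromEdgeSet {s(x,y)}))
    {u₀ u' v₀ v' w : V} (p : G.Walk u₀ u') (q : G.Walk v₀ v')
    (hp : p.IsPath) (hq : q.IsPath) (hplen : p.length = M+3) (hqlen : q.length = M+3)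
    (hdisj : ∀ x ∈ p.support, x ∉ q.support)
    (hpdeg : ∀ x ∈ p.support, (G.neighborSet x).ncard = 2)
    (hqdeg : ∀ x ∈ q.support, (G.neighborSet x).ncard = 2)
    (hwu : G.Adj w u₀) (hwv : G.Adj w v₀)
    (hwu' : G.Adj w u') (hwv' : G.Adj w v') : False := by
  have e47 : M + 4 + 3 = M + 7 := by omega
  have hpmem : ∀ i, i ≤ M+3 → p.getVert i ∈ p.support :=
    fun i hi => getVert_mem_support'_s12 p (by rw [hplen]; exact hi)
  have hqmem : ∀ i, i ≤ M+3 → q.getVert i ∈ q.support :=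
    fun i hi => getVert_mem_support'_s12 q (by rw [hqlen]; exact hi)
  have hpinj : ∀ i j, i ≤ M+3 → j ≤ M+3 → p.getVert i = p.getVert j → i = j :=
    fun i j hi hj h => hp.getVert_inj (by rw [hplen]; exact hi) (by rw [hplen]; exact hj) h
  have hqinj : ∀ i j, i ≤ M+3 → j ≤ M+3 → q.getVert i = q.getVert j → i = j :=
    fun i j hi hj h => hq.getVert_inj (by rw [hqlen]; exact hi) (by rw [hqlen]; exact hj) h
  have padj : ∀ i, i < M+3 → G.Adj (p.getVert i) (p.getVert (i+1)) :=
    fun i hi => p.adj_getVert_succ (by rw [hplen]; exact hi)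
  have qadj : ∀ i, i < M+3 → G.Adj (q.getVert i) (q.getVert (i+1)) :=
    fun i hi => q.adj_getVert_succ (by rw [hqlen]; exact hi)
  have pe0 : p.getVert 0 = u₀ := p.getVert_zero
  have peL : p.getVert (M+3) = u' := by rw [← hplen]; exact p.getVert_length
  have qe0 : q.getVert 0 = v₀ := q.getVert_zero
  have qeL : q.getVert (M+3) = v' := by rw [← hqlen]; exact q.getVert_length
  have hv0p : v₀ ∉ p.support := fun h => hdisj v₀ h q.start_mem_support
  have hv'p : v' ∉ p.support := fun h => hdisj v' h q.end_mem_support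
  have hu0q : u₀ ∉ q.support := fun h => hdisj u₀ p.start_mem_support h
  have hu'q : u' ∉ q.support := fun h => hdisj u' p.end_mem_support h
  have hwp : w ∉ p.support := w_not_mem hp (by rw [hplen]; omega) hpdeg hwu hwv hv0p
  have hwq : w ∉ q.support := w_not_mem hq (by rw [hqlen]; omega) hqdeg hwv hwu hu0q
  have hNu0 : ∀ c, G.Adj u₀ c → c = p.getVert 1 ∨ c = w := by
    intro c hc
    have ha : G.Adj u₀ (p.getVert 1) := by have := padj 0 (by omega); rwa [pe0] at this
    have hab : p.getVert 1 ≠ w := fun h => hwp (h ▸ hpmem 1 (by omega))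
    exact two_nbrs_s12 (hpdeg _ p.start_mem_support) ha hwu.symm hab hc
  have hNv0 : ∀ c, G.Adj v₀ c → c = q.getVert 1 ∨ c = w := by
    intro c hc
    have ha : G.Adj v₀ (q.getVert 1) := by have := qadj 0 (by omega); rwa [qe0] at this
    have hab : q.getVert 1 ≠ w := fun h => hwq (h ▸ hqmem 1 (by omega))
    exact two_nbrs_s12 (hqdeg _ q.start_mem_support) ha hwv.symm hab hc
  have hNp : ∀ i, 1 ≤ i → i < M+3 → ∀ c, G.Adj (p.getVert i) c →
      c = p.getVert (i-1) ∨ c = p.getVert (i+1) := by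
    intro i h1 h2 c hc
    have ha : G.Adj (p.getVert i) (p.getVert (i-1)) := by
      have := (padj (i-1) (by omega)).symm
      rwa [Nat.sub_add_cancel (by omega)] at this
    have hb := padj i h2
    have hab : p.getVert (i-1) ≠ p.getVert (i+1) := fun h => by
      have := hpinj _ _ (by omega) (by omega) h; omega
    exact two_nbrs_s12 (hpdeg _ (hpmem i (by omega))) ha hb hab hc
  have hNq : ∀ i, 1 ≤ i → i < M+3 → ∀ c, G.Adj (q.getVert i) c →
      c = q.getVert (i-1) ∨ c = q.getVert (i+1) := by
    intro i h1 h2 c hc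
    have ha : G.Adj (q.getVert i) (q.getVert (i-1)) := by
      have := (qadj (i-1) (by omega)).symm
      rwa [Nat.sub_add_cancel (by omega)] at this
    have hb := qadj i h2
    have hab : q.getVert (i-1) ≠ q.getVert (i+1) := fun h => by
      have := hqinj _ _ (by omega) (by omega) h; omega
    exact two_nbrs_s12 (hqdeg _ (hqmem i (by omega))) ha hb hab hc
  have hfree' : ¬ HasCopy (cycleGraph (M+4+3)) G := by rw [e47]; exact hfree
  have hNu'w : ∀ c, G.Adj u' c → c = p.getVert (M+2) ∨ c = w := by
    intro c hc
    have ha : G.Adj u' (p.getVert (M+2)) := by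
      have := (padj (M+2) (by omega)).symm
      rwa [show M+2+1 = M+3 by omega, peL] at this
    have hab : p.getVert (M+2) ≠ w := fun h => hwp (by rw [← h]; exact hpmem _ (by omega))
    exact two_nbrs_s12 (hpdeg _ p.end_mem_support) ha hwu'.symm hab hc
  have hNv'w : ∀ c, G.Adj v' c → c = q.getVert (M+2) ∨ c = w := by
    intro c hc
    have ha : G.Adj v' (q.getVert (M+2)) := by
      have := (qadj (M+2) (by omega)).symm
      rwa [show M+2+1 = M+3 by omega, qeL] at this
    have hab : q.getVert (M+2) ≠ w := fun h => hwq (by rw [← h]; exact hqmem _ (by omega))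
    exact two_nbrs_s12 (hqdeg _ q.end_mem_support) ha hwv'.symm hab hc
  -- non-edge u₀ v₀
  have hne1 : u₀ ≠ v₀ := fun h => hv0p (h ▸ p.start_mem_support)
  have hnadj1 : ¬ G.Adj u₀ v₀ := by
    intro h
    rcases hNu0 _ h with h1 | h1
    · exact hv0p (by rw [h1]; exact hpmem 1 (by omega))
    · exact hwv.ne' h1
  have hcopy1 : HasCopy (cycleGraph (M+4+3)) (G ⊔ fromEdgeSet {s(u₀, v₀)}) := by
    rw [e47]; exact hsat2 u₀ v₀ hne1 hnadj1
  obtain ⟨R, hR, hRlen0⟩ := exists_path_of_addEdge hne1 hfree' hcopy1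
  have hRlen : R.length = M+6 := by omega
  have hRinj : ∀ i j, i ≤ M+6 → j ≤ M+6 → R.getVert i = R.getVert j → i = j :=
    fun i j hi hj h => hR.getVert_inj (by omega) (by omega) h
  have Radj : ∀ i, i < M+6 → G.Adj (R.getVert i) (R.getVert (i+1)) :=
    fun i hi => R.adj_getVert_succ (by omega)
  have Re0 : R.getVert 0 = u₀ := R.getVert_zero
  have ReL : R.getVert (M+6) = v₀ := by
    rw [show M+6 = R.length by omega]; exact R.getVert_length
  have hrev : ∀ i, R.reverse.getVert i = R.getVert (M+6-i) := fun i => by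
    rw [Walk.getVert_reverse, show R.length - i = M+6-i by omega]
  have hRrev : R.reverse.IsPath := hR.reverse
  have ha1 : R.getVert 1 = p.getVert 1 ∨ R.getVert 1 = w := by
    apply hNu0
    have := Radj 0 (by omega); rwa [Re0] at this
  have hpen : R.getVert (M+5) = q.getVert 1 ∨ R.getVert (M+5) = w := by
    apply hNv0
    have := (Radj (M+5) (by omega)).symm
    rwa [ReL] at this
  -- if R ends along q, then R.getVert 2 = w
  have hqside : R.getVert (M+5) = q.getVert 1 → R.getVert 2 = w := by
    intro hE
    have h₀ : R.reverse.getVert 0 = q.getVert 0 := (Walk.getVert_zero _).trans qe0.symm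
    have h₁ : R.reverse.getVert 1 = q.getVert (0+1) := by
      have h' := hrev 1
      rw [show M+6-1 = M+5 by omega] at h'
      exact h'.trans hE
    have hchq := chain_force hq hqdeg hRrev hu0q 0 h₀ h₁
    have hchq' : ∀ i, i ≤ M+3 → R.reverse.getVert i = q.getVert i := by
      intro i hi
      have := (hchq i (by rw [hqlen]; omega)).2
      rwa [zero_add] at this
    have hrevlen : R.reverse.length = M+6 := by rw [Walk.length_reverse]; omega
    have hdv : G.Adj v' (R.reverse.getVert (M+4)) := by
      have := R.reverse.adj_getVert_succ (i := M+3) (by omega)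
      rwa [hchq' (M+3) (by omega), qeL] at this
    rcases hNv'w _ hdv with h | h
    · exfalso
      have : M+4 = M+2 := hRrev.getVert_inj (by omega) (by omega)
        (h.trans (hchq' (M+2) (by omega)).symm)
      omega
    · have h' := hrev (M+4)
      rw [show M+6-(M+4) = 2 by omega] at h'
      exact h'.symm.trans h
  rcases ha1 with ha1 | ha1 <;> rcases hpen with hpen | hpen
  · -- starts along p, ends along q
    have hch := chain_force hp hpdeg hR hv0p 0 (by rw [Re0, pe0]) (by rw [ha1])
    have hchp : ∀ i, i ≤ M+3 → R.getVert i = p.getVert i := by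
      intro i hi
      have := (hch i (by rw [hplen]; omega)).2
      rwa [zero_add] at this
    have hd : G.Adj u' (R.getVert (M+4)) := by
      have := Radj (M+3) (by omega)
      rwa [hchp (M+3) (by omega), peL] at this
    rcases hNu'w _ hd with h | h
    · have : M+4 = M+2 := hRinj _ _ (by omega) (by omega)
        (h.trans (hchp (M+2) (by omega)).symm)
      omega
    · have h2 := hqside hpen
      have : M+4 = 2 := hRinj _ _ (by omega) (by omega) (h.trans h2.symm)
      omega
  · -- starts along p, ends at w
    have hch := chain_force hp hpdeg hR hv0p 0 (by rw [Re0, pe0]) (by rw [ha1])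
    have hchp : ∀ i, i ≤ M+3 → R.getVert i = p.getVert i := by
      intro i hi
      have := (hch i (by rw [hplen]; omega)).2
      rwa [zero_add] at this
    have hd : G.Adj u' (R.getVert (M+4)) := by
      have := Radj (M+3) (by omega)
      rwa [hchp (M+3) (by omega), peL] at this
    rcases hNu'w _ hd with h | h
    · have : M+4 = M+2 := hRinj _ _ (by omega) (by omega)
        (h.trans (hchp (M+2) (by omega)).symm)
      omega
    · have : M+4 = M+5 := hRinj _ _ (by omega) (by omega) (h.trans hpen.symm)
      omega
  · -- starts at w, ends along q
    have h2 := hqside hpen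
    have : 1 = 2 := hRinj _ _ (by omega) (by omega) (ha1.trans h2.symm)
    omega
  · -- starts at w, ends at w
    have : 1 = M+5 := hRinj _ _ (by omega) (by omega) (ha1.trans hpen.symm)
    omega

end Aux


theorem no_common_neighbor_of_two_long_degree_two_paths
    (k : ℕ) (hk : 7 ≤ k) (V : Type) [Fintype V] (G : SimpleGraph V)
    (hsat : IsSat (cycleGraph k) G)
    (u₀ u' v₀ v' : V) (p : G.Walk u₀ u') (q : G.Walk v₀ v')
    (hp : p.IsPath) (hq : q.IsPath)
    (hplen : p.length = k - 4) (hqlen : q.length = k - 4)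
    (hdisj : ∀ v ∈ p.support, v ∉ q.support)
    (hpdeg : ∀ v ∈ p.support, (G.neighborSet v).ncard = 2)
    (hqdeg : ∀ v ∈ q.support, (G.neighborSet v).ncard = 2) :
    ¬ ∃ w : V, G.Adj w u₀ ∧ G.Adj w v₀ := by
  rintro ⟨w, hwu, hwv⟩
  obtain ⟨M, rfl⟩ : ∃ M, k = M + 7 := ⟨k - 7, by omega⟩
  have hplen' : p.length = M + 3 := by rw [hplen]; omega
  have hqlen' : q.length = M + 3 := by rw [hqlen]; omega
  obtain ⟨hfree, hsat2⟩ := hsat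
  by_cases h1 : G.Adj w u'
  · by_cases h2 : G.Adj w v'
    · exact aux2 hfree hsat2 p q hp hq hplen' hqlen' hdisj hpdeg hqdeg hwu hwv h1 h2
    · exact aux hfree hsat2 q p hq hp hqlen' hplen'
        (fun x hx hxp => hdisj x hxp hx) hqdeg hpdeg hwv hwu h2
  · exact aux hfree hsat2 p q hp hq hplen' hqlen' hdisj hpdeg hqdeg hwu hwv h1
end
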